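/- arXiv:1812.09739 — 2 statements merged into one kernel-verified Lean document; each statement's English description precedes it below -/
import Mathlib

section
/- Let i ≥ 1 and 1 ≤ s ≤ q−1. Then for any integers μ_1,…,μ_s ≥ 0 and any 0 ≤ j_1,…,j_s ≤ i, the following identity holds in K = 𝔽_q(θ): Σ_{a ∈ A_{i+}} ( ∂_θ^{j_1}(a)^{q^{μ_1}} ··· ∂_θ^{j_s}(a)^{q^{μ_s}} ) / a = (1/L_i) · Π_{r=1}^{s} (−1)^{i−j_r} · e_{i,i−j_r}( θ − θ^{q^{μ_r}}, θ^q − θ^{q^{μ_r}}, …, θ^{q^{i−1}} − θ^{q^{μ_r}} ). -/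
open Polynomial Finset

noncomputable section

/-- Elementary symmetric polynomial of degree `j` in the family `v` indexed by the finite set `s`. -/
def esymF {R : Type*} [CommRing R] {α : Type*} [DecidableEq α] (s : Finset α) (v : α → R) (j : ℕ) : R :=
  ∑ S ∈ s.powersetCard j, ∏ m ∈ S, v m

variable (F : Type*) [Field F] [Fintype F]

local notation "q" => Fintype.card F

/-- `L_i = (−1)^i [i][i−1]···[1] ∈ A = 𝔽_q[θ]` where `[n] = θ^{q^n} − θ` (and `L_0 = 1`);
here `A` is realized as `Polynomial F` with `θ = X`. -/
def Lp (i : ℕ) : Polynomial F :=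
  (-1 : Polynomial F) ^ i * ∏ n ∈ Icc 1 i, ((X : Polynomial F) ^ q ^ n - X)

/-- `θ` as an element of `K = 𝔽_q(θ)`, realized as `RatFunc F`. -/
def θK : RatFunc F := algebraMap (Polynomial F) (RatFunc F) X

-- ================= auxiliary development =================
namespace Stmt9Aux

local notation "K" => RatFunc F
local notation "φ" => algebraMap (Polynomial F) (RatFunc F)
local notation "φF" => algebraMap F (RatFunc F)

lemma hq2 : 2 ≤ q := Fintype.one_lt_card

lemma phi_inj : Function.Injective (φ) := RatFunc.algebraMap_injective F

/-- the nodes θ^{q^ν} in K -/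
def tK (ν : ℕ) : K := θK F ^ q ^ ν

lemma tK_injective : Function.Injective (tK F) := by
  intro a b h
  have : (X : Polynomial F) ^ q ^ a = X ^ q ^ b := by
    apply phi_inj F
    simpa [tK, θK, map_pow] using h
  have h2 := congrArg natDegree this
  simp only [natDegree_X_pow] at h2
  exact Nat.pow_right_injective (hq2 F) h2

lemma phiF_inj : Function.Injective (φF) := (algebraMap F (RatFunc F)).injective

set_option linter.unusedSectionVars false

variable [DecidableEq F]

/-- lower-order part -/
def PV (i : ℕ) (c : Fin i → F) : Polynomial F := ∑ k : Fin i, C (c k) * X ^ (k : ℕ)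

def aPoly (i : ℕ) (c : Fin i → F) : Polynomial F := X ^ i + PV F i c

lemma PV_degree_lt (i : ℕ) (c : Fin i → F) : (PV F i c).degree < (i : ℕ) := by
  apply lt_of_le_of_lt (degree_sum_le _ _)
  rw [Finset.sup_lt_iff]
  · intro k _
    exact lt_of_le_of_lt (degree_C_mul_X_pow_le _ _) (by exact_mod_cast k.2)
  · exact WithBot.bot_lt_coe _

lemma PV_coeff (i : ℕ) (c : Fin i → F) (k : Fin i) : (PV F i c).coeff k = c k := by
  rw [PV, finset_sum_coeff]
  rw [Finset.sum_eq_single k]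
  · simp
  · intro b _ hb
    rw [coeff_C_mul, coeff_X_pow, if_neg, mul_zero]
    exact fun h => hb (Fin.ext h.symm)
  · simp

lemma PV_coeff_ge (i : ℕ) (c : Fin i → F) (m : ℕ) (hm : i ≤ m) : (PV F i c).coeff m = 0 :=
  coeff_eq_zero_of_degree_lt (lt_of_lt_of_le (PV_degree_lt F i c) (by exact_mod_cast hm))

lemma PV_injective (i : ℕ) : Function.Injective (PV F i) := by
  intro c d h
  funext k
  rw [← PV_coeff F i c k, ← PV_coeff F i d k, h]

lemma aPoly_monic (i : ℕ) (c : Fin i → F) : (aPoly F i c).Monic :=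
  monic_X_pow_add (PV_degree_lt F i c)

lemma aPoly_natDegree (i : ℕ) (c : Fin i → F) : (aPoly F i c).natDegree = i := by
  have h : (X ^ i + PV F i c).degree = ((X : Polynomial F) ^ i).degree :=
    degree_add_eq_left_of_degree_lt (by rw [degree_X_pow]; exact PV_degree_lt F i c)
  rw [aPoly]
  exact natDegree_eq_of_degree_eq_some (by rw [h, degree_X_pow])

lemma aPoly_injective (i : ℕ) : Function.Injective (aPoly F i) := by
  intro c d h
  exact PV_injective F i (by rwa [aPoly, aPoly, add_right_inj] at h)

lemma mem_aPoly_iff (i : ℕ) (a : Polynomial F) :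
    (a.Monic ∧ a.natDegree = i) ↔ ∃ c : Fin i → F, aPoly F i c = a := by
  constructor
  · rintro ⟨hm, hd⟩
    refine ⟨fun k => a.coeff k, ?_⟩
    ext m
    rcases lt_trichotomy m i with h | h | h
    · rw [aPoly, coeff_add, coeff_X_pow, if_neg (by omega), zero_add,
        PV_coeff F i _ ⟨m, h⟩]
    · subst h
      rw [aPoly, coeff_add, coeff_X_pow, if_pos rfl, PV_coeff_ge F m _ _ le_rfl, add_zero]
      have h2 := hm.coeff_natDegree
      rw [hd] at h2
      exact h2.symm
    · rw [aPoly, coeff_add, coeff_X_pow, if_neg (by omega), zero_add,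
        PV_coeff_ge F i _ _ (by omega)]
      exact (coeff_eq_zero_of_natDegree_lt (by omega)).symm
  · rintro ⟨c, rfl⟩
    exact ⟨aPoly_monic F i c, aPoly_natDegree F i c⟩

def VK (i : ℕ) (c : Fin i → F) : RatFunc F := ∑ k : Fin i, φF (c k) * θK F ^ (k : ℕ)

lemma phi_C (x : F) : φ (C x) = φF x := by
  simp [RatFunc.algebraMap_C]


lemma VK_eq_phi_PV (i : ℕ) (c : Fin i → F) : VK F i c = φ (PV F i c) := by
  rw [VK, PV, map_sum]
  refine Finset.sum_congr rfl fun k _ => ?_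
  rw [map_mul, phi_C, map_pow]
  rfl

def vK (i : ℕ) (c : Fin i → F) : RatFunc F := φ (aPoly F i c)

lemma vK_eq (i : ℕ) (c : Fin i → F) : vK F i c = θK F ^ i + VK F i c := by
  rw [vK, aPoly, map_add, map_pow, VK_eq_phi_PV]
  rfl

lemma VK_injective (i : ℕ) : Function.Injective (VK F i) := by
  intro c d h
  rw [VK_eq_phi_PV, VK_eq_phi_PV] at h
  exact PV_injective F i (phi_inj F h)

lemma VK_ne_zero (i : ℕ) {c : Fin i → F} (hc : c ≠ 0) : VK F i c ≠ 0 := by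
  intro h
  apply hc
  apply VK_injective F i
  rw [h]
  simp [VK]

lemma VK_sub (i : ℕ) (c d : Fin i → F) : VK F i (c - d) = VK F i c - VK F i d := by
  simp [VK, ← Finset.sum_sub_distrib, sub_mul, map_sub]

lemma VK_smul (i : ℕ) (e : F) (c : Fin i → F) :
    VK F i (fun k => e * c k) = φF e * VK F i c := by
  simp [VK, Finset.mul_sum, map_mul, mul_assoc]

lemma vK_injective (i : ℕ) : Function.Injective (vK F i) := by
  intro c d h
  exact aPoly_injective F i (phi_inj F h)

lemma vK_ne_zero (i : ℕ) (c : Fin i → F) : vK F i c ≠ 0 := by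
  rw [vK, ← map_zero (φ)]
  exact fun h => (aPoly_monic F i c).ne_zero (phi_inj F h)

lemma vK_sub (i : ℕ) (c d : Fin i → F) : vK F i c - vK F i d = VK F i (c - d) := by
  rw [vK_eq, vK_eq, VK_sub]; ring

lemma expand_pow_card (a : Polynomial F) (ν : ℕ) : expand F (q ^ ν) a = a ^ q ^ ν := by
  induction ν with
  | zero => simp [expand_one]
  | succ n ih =>
      rw [pow_succ, expand_mul, FiniteField.expand_card, map_pow, ih, ← pow_mul]

lemma tK_eq_phi (ν : ℕ) : tK F ν = φ (X ^ q ^ ν) := by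
  simp [tK, θK, map_pow]

lemma eval_map_tK (a : Polynomial F) (ν : ℕ) :
    (a.map (φF)).eval (tK F ν) = (φ a) ^ q ^ ν := by
  rw [eval_map, tK_eq_phi, ← aeval_def, aeval_algebraMap_apply, ← map_pow]
  congr 1
  have : (aeval ((X : Polynomial F) ^ q ^ ν)) a = a.comp (X ^ q ^ ν) := by
    rw [aeval_def, comp]
    rfl
  rw [this, ← expand_eq_comp_X_pow, expand_pow_card]

def Pprod (i : ℕ) : Polynomial (RatFunc F) := ∏ ν ∈ range i, (X - C (tK F ν))

lemma tK_injOn (i : ℕ) : Set.InjOn (tK F) (range i) :=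
  fun a _ b _ h => tK_injective F h

lemma Pprod_monic (i : ℕ) : (Pprod F i).Monic :=
  monic_prod_of_monic _ _ fun ν _ => monic_X_sub_C _

lemma Pprod_natDegree (i : ℕ) : (Pprod F i).natDegree = i := by
  rw [Pprod, natDegree_prod_of_monic _ _ fun ν _ => monic_X_sub_C _]
  simp

lemma Pprod_eval_node (i : ℕ) {ν : ℕ} (hν : ν ∈ range i) :
    (Pprod F i).eval (tK F ν) = 0 := by
  rw [Pprod, eval_prod]
  exact Finset.prod_eq_zero hν (by simp)

lemma interp (i : ℕ) (a : Polynomial F) (hm : a.Monic) (hd : a.natDegree = i) :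
    a.map (φF) = Pprod F i
      + ∑ ν ∈ range i, C ((φ a) ^ q ^ ν) * Lagrange.basis (range i) (tK F) ν := by
  set f := a.map (φF) - Pprod F i with hf
  have hmap : (a.map (φF)).Monic := hm.map _
  have hdeg : (a.map (φF)).natDegree = i := by
    rw [natDegree_map_eq_of_injective (phiF_inj F), hd]
  have hsub : f.degree < i := by
    have h1 : (a.map (φF)).degree = (Pprod F i).degree := by
      rw [degree_eq_natDegree hmap.ne_zero, degree_eq_natDegree (Pprod_monic F i).ne_zero, hdeg,
        Pprod_natDegree]
    have := degree_sub_lt h1 hmap.ne_zero (by rw [hmap.leadingCoeff, (Pprod_monic F i).leadingCoeff])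
    rwa [degree_eq_natDegree hmap.ne_zero, hdeg] at this
  have key := Lagrange.eq_interpolate (v := tK F) (s := range i) (tK_injOn F i)
    (f := f) (by rw [card_range]; exact hsub)
  rw [Lagrange.interpolate_apply] at key
  have heval : ∀ ν ∈ range i, f.eval (tK F ν) = (φ a) ^ q ^ ν := by
    intro ν hν
    rw [hf, eval_sub, Pprod_eval_node F i hν, sub_zero, eval_map_tK]
  calc a.map (φF) = Pprod F i + f := by rw [hf]; ring
    _ = _ := by
        rw [key]
        congr 1
        exact Finset.sum_congr rfl fun ν hν => by rw [heval ν hν]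

lemma frob_sub (x y : RatFunc F) : (x - y) ^ q = x ^ q - y ^ q := by
  have p := ringChar F
  haveI : CharP (RatFunc F) (ringChar F) :=
    charP_of_injective_algebraMap (phiF_inj F) (ringChar F)
  haveI : Fact (ringChar F).Prime := ⟨CharP.char_is_prime F (ringChar F)⟩
  obtain ⟨n, -, hq⟩ := FiniteField.card F (ringChar F)
  rw [hq, sub_pow_char_pow]

lemma zero_pow_q : (0 : RatFunc F) ^ q = 0 :=
  zero_pow (by have := hq2 F; omega)

lemma neg_one_pow_q : (-1 : RatFunc F) ^ q = -1 := by
  have := frob_sub F 0 1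
  simpa [zero_pow_q F] using this

lemma neg_one_pow_q_pow (k : ℕ) : (-1 : RatFunc F) ^ q ^ k = -1 := by
  induction k with
  | zero => simp
  | succ n ih => rw [pow_succ, pow_mul, ih, neg_one_pow_q]

lemma neg_one_pow_q_pow_sub_one (k : ℕ) : (-1 : RatFunc F) ^ (q ^ k - 1) = 1 := by
  have h1 : 1 ≤ q ^ k := Nat.one_le_pow _ _ (by have := hq2 F; omega)
  have := neg_one_pow_q_pow F k
  rw [show q ^ k = (q ^ k - 1) + 1 by omega, pow_succ] at this
  have h2 := congrArg (· * (-1 : RatFunc F)) this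
  simpa using h2

lemma neg_one_pow_q_pow_add_one (k : ℕ) : (-1 : RatFunc F) ^ (q ^ k + 1) = 1 := by
  rw [pow_succ, neg_one_pow_q_pow]
  simp

lemma card_fun_fin (i : ℕ) : Fintype.card (Fin i → F) = q ^ i := by
  rw [Fintype.card_fun, Fintype.card_fin]

lemma eval_basis {ι : Type*} [DecidableEq ι] (s : Finset ι) (v : ι → RatFunc F) (c : ι) (w : RatFunc F) :
    (Lagrange.basis s v c).eval w = ∏ d ∈ s.erase c, ((v c - v d)⁻¹ * (w - v d)) := by
  rw [Lagrange.basis, eval_prod]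
  exact Finset.prod_congr rfl fun d _ => by simp [Lagrange.basisDivisor]

def Pim (i : ℕ) : RatFunc F := ∏ c : Fin i → F, vK F i c

def δm (i : ℕ) : RatFunc F := ∏ d ∈ (univ : Finset (Fin i → F)).erase 0, VK F i d

lemma Pim_ne_zero (i : ℕ) : Pim F i ≠ 0 :=
  Finset.prod_ne_zero_iff.2 fun c _ => vK_ne_zero F i c

lemma δm_ne_zero (i : ℕ) : δm F i ≠ 0 :=
  Finset.prod_ne_zero_iff.2 fun d hd => VK_ne_zero F i (Finset.mem_erase.1 hd).1

lemma vK_injOn (i : ℕ) : Set.InjOn (vK F i) ((univ : Finset (Fin i → F)) : Set (Fin i → F)) :=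
  fun a _ b _ h => vK_injective F i h

lemma prod_erase_sub (i : ℕ) (c : Fin i → F) :
    ∏ d ∈ (univ : Finset (Fin i → F)).erase c, (vK F i c - vK F i d) = δm F i := by
  rw [δm, show (univ : Finset (Fin i → F)).erase 0
      = ((univ : Finset (Fin i → F)).erase c).image (fun d => c - d) from ?_]
  · rw [Finset.prod_image (fun a _ b _ h => by
      have : c - a = c - b := h
      have := congrArg (fun x => c - x) this
      simpa using this)]
    exact Finset.prod_congr rfl fun d _ => vK_sub F i c d
  · ext e
    simp only [Finset.mem_erase, Finset.mem_image, Finset.mem_univ, and_true]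
    constructor
    · intro he
      refine ⟨c - e, fun h => he (by simpa using sub_eq_self.1 h), by ring⟩
    · rintro ⟨d, hd, rfl⟩
      exact sub_ne_zero.2 fun h => hd h.symm
lemma prod_erase_vK (i : ℕ) (c : Fin i → F) :
    ∏ d ∈ (univ : Finset (Fin i → F)).erase c, vK F i d = Pim F i / vK F i c := by
  rw [eq_div_iff (vK_ne_zero F i c), mul_comm, Pim]
  exact Finset.mul_prod_erase _ _ (Finset.mem_univ c)

lemma core (i : ℕ) (g : Polynomial (RatFunc F)) (hg : g.degree < ((q ^ i : ℕ) : WithBot ℕ)) :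
    ∑ c : Fin i → F, g.eval (vK F i c) / vK F i c = δm F i / Pim F i * g.eval 0 := by
  have key := Lagrange.eq_interpolate (v := vK F i) (s := univ) (vK_injOn F i)
    (f := g) (by rw [card_univ, card_fun_fin]; exact hg)
  have h0 := congrArg (eval 0) key
  rw [Lagrange.interpolate_apply, eval_finset_sum] at h0
  have hterm : ∀ c : Fin i → F,
      eval 0 (C (g.eval (vK F i c)) * Lagrange.basis univ (vK F i) c)
        = (δm F i)⁻¹ * Pim F i * (g.eval (vK F i c) / vK F i c) := by
    intro c
    rw [eval_mul, eval_C, eval_basis]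
    rw [Finset.prod_mul_distrib, Finset.prod_inv_distrib, prod_erase_sub]
    have : ∏ d ∈ (univ : Finset (Fin i → F)).erase c, (0 - vK F i d)
        = Pim F i / vK F i c := by
      have h1 : ∀ d, (0 : RatFunc F) - vK F i d = -1 * vK F i d := fun d => by ring
      simp only [h1]
      rw [Finset.prod_mul_distrib, Finset.prod_const, prod_erase_vK,
        Finset.card_erase_of_mem (Finset.mem_univ c), card_univ, card_fun_fin,
        neg_one_pow_q_pow_sub_one, one_mul]
    rw [this]
    field_simp
  rw [Finset.sum_congr rfl fun c _ => hterm c, ← Finset.mul_sum] at h0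
  rw [h0]
  rw [eq_comm, div_mul_eq_mul_div, div_eq_iff (Pim_ne_zero F i)]
  field_simp
  rw [mul_assoc, mul_div_cancel_left₀ _ (δm_ne_zero F i)]

lemma sum_inv_vK (i : ℕ) :
    ∑ c : Fin i → F, 1 / vK F i c = δm F i / Pim F i := by
  have h := core F i 1 (by
    rw [degree_one]
    exact_mod_cast WithBot.coe_lt_coe.2 (pow_pos (show 0 < q by have := hq2 F; omega) i))
  simpa using h

lemma sum_pow_qnu (i ν : ℕ) (hν : ν < i) :
    ∑ c : Fin i → F, (vK F i c) ^ q ^ ν / vK F i c = 0 := by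
  have h := core F i (X ^ q ^ ν) (by
    rw [degree_X_pow]
    exact_mod_cast WithBot.coe_lt_coe.2 (Nat.pow_lt_pow_right (Nat.lt_of_lt_of_le Nat.one_lt_two (hq2 F)) hν))
  simpa [zero_pow (pow_pos (show 0 < q by have := hq2 F; omega) ν).ne'] using h

lemma sum_pow_qi (i : ℕ) :
    ∑ c : Fin i → F, (vK F i c) ^ q ^ i / vK F i c = δm F i := by
  set W : Polynomial (RatFunc F) := ∏ c : Fin i → F, (X - C (vK F i c)) with hW
  have hWmonic : W.Monic := monic_prod_of_monic _ _ fun c _ => monic_X_sub_C _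
  have hWdeg : W.natDegree = q ^ i := by
    rw [hW, natDegree_prod_of_monic _ _ fun c _ => monic_X_sub_C _]
    simp [card_fun_fin]
  have hdeg : ((X : Polynomial (RatFunc F)) ^ q ^ i - W).degree < ((q ^ i : ℕ) : WithBot ℕ) := by
    have h1 : ((X : Polynomial (RatFunc F)) ^ q ^ i).degree = W.degree := by
      rw [degree_X_pow, degree_eq_natDegree hWmonic.ne_zero, hWdeg]
    have := degree_sub_lt h1 (by exact pow_ne_zero _ X_ne_zero)
      (by rw [leadingCoeff_X_pow, hWmonic.leadingCoeff])
    rwa [degree_X_pow] at this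
  have h := core F i (X ^ q ^ i - W) hdeg
  have hevalc : ∀ c : Fin i → F, eval (vK F i c) ((X : Polynomial (RatFunc F)) ^ q ^ i - W)
      = (vK F i c) ^ q ^ i := by
    intro c
    rw [eval_sub, eval_pow, eval_X, hW, eval_prod,
      Finset.prod_eq_zero (Finset.mem_univ c) (by simp), sub_zero]
  have heval0 : eval 0 ((X : Polynomial (RatFunc F)) ^ q ^ i - W) = Pim F i := by
    rw [eval_sub, eval_pow, eval_X,
      zero_pow (pow_pos (show 0 < q by have := hq2 F; omega) i).ne', hW, eval_prod]
    have : ∀ c : Fin i → F, eval 0 ((X : Polynomial (RatFunc F)) - C (vK F i c))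
        = -1 * vK F i c := by intro c; simp
    rw [Finset.prod_congr rfl fun c _ => this c, Finset.prod_mul_distrib,
      Finset.prod_const, card_univ, card_fun_fin]
    have hsign : ((-1 : RatFunc F)) ^ q ^ i = -1 := neg_one_pow_q_pow F i
    rw [hsign, Pim]
    ring
  rw [Finset.sum_congr rfl (fun c _ => by rw [hevalc c])] at h
  rw [h, heval0, div_mul_eq_mul_div, mul_div_assoc, div_self (Pim_ne_zero F i), mul_one]

lemma anchor (i : ℕ) : Pim F i = ∏ ν ∈ range i, (tK F i - tK F ν) := by
  set Pval : RatFunc F := (Pprod F i).eval (tK F i) with hPval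
  have hbv : ∀ c : Fin i → F, (vK F i c) ^ q ^ i
      = Pval + ∑ ν ∈ range i, (vK F i c) ^ q ^ ν
          * (Lagrange.basis (range i) (tK F) ν).eval (tK F i) := by
    intro c
    have h := congrArg (eval (tK F i)) (interp F i (aPoly F i c) (aPoly_monic F i c)
      (aPoly_natDegree F i c))
    rw [eval_map_tK] at h
    rw [eval_add, eval_finset_sum] at h
    rw [show (φ (aPoly F i c)) = vK F i c from rfl] at h
    rw [h, hPval]
    congr 1
    exact Finset.sum_congr rfl fun ν _ => by rw [eval_mul, eval_C]
  have hsum : δm F i = Pval * (δm F i / Pim F i) := by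
    calc δm F i = ∑ c : Fin i → F, (vK F i c) ^ q ^ i / vK F i c := (sum_pow_qi F i).symm
    _ = ∑ c : Fin i → F, (Pval / vK F i c
          + ∑ ν ∈ range i, (Lagrange.basis (range i) (tK F) ν).eval (tK F i)
              * ((vK F i c) ^ q ^ ν / vK F i c)) := by
        refine Finset.sum_congr rfl fun c _ => ?_
        rw [hbv c, add_div, Finset.sum_div]
        congr 1
        exact Finset.sum_congr rfl fun ν _ => by ring
    _ = Pval * (δm F i / Pim F i) := by
        rw [Finset.sum_add_distrib]
        rw [Finset.sum_comm]
        have h2 : ∀ ν ∈ range i, ∑ c : Fin i → F,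
            (Lagrange.basis (range i) (tK F) ν).eval (tK F i)
              * ((vK F i c) ^ q ^ ν / vK F i c) = 0 := by
          intro ν hν
          rw [← Finset.mul_sum, sum_pow_qnu F i ν (Finset.mem_range.1 hν), mul_zero]
        rw [Finset.sum_congr rfl h2, Finset.sum_const_zero, add_zero]
        have h3 : ∑ c : Fin i → F, Pval / vK F i c
            = Pval * ∑ c : Fin i → F, 1 / vK F i c := by
          rw [Finset.mul_sum]
          exact Finset.sum_congr rfl fun c _ => by ring
        rw [h3, sum_inv_vK]
  have h4 : Pim F i * δm F i = Pval * δm F i := by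
    calc Pim F i * δm F i = (Pval * (δm F i / Pim F i)) * Pim F i := by
          rw [← hsum]; ring
    _ = Pval * δm F i := by rw [mul_assoc, div_mul_cancel₀ _ (Pim_ne_zero F i)]
  have : Pval = Pim F i := (mul_right_cancel₀ (δm_ne_zero F i) h4).symm
  rw [← this, hPval, Pprod, eval_prod]
  exact Finset.prod_congr rfl fun ν _ => by simp

lemma prod_nonzero_eq_neg_one : ∏ e ∈ (univ : Finset F).erase 0, e = -1 := by
  have h1 : ∏ u : Fˣ, (u : F) = -1 := by
    have h0 : ∏ u : Fˣ, u = (-1 : Fˣ) := FiniteField.prod_univ_units_id_eq_neg_one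
    have h2 := congrArg (Units.coeHom F) h0
    simpa using h2
  rw [← h1]
  symm
  apply Finset.prod_bij (fun (u : Fˣ) _ => (u : F))
  · intro u _
    exact Finset.mem_erase.2 ⟨u.ne_zero, Finset.mem_univ _⟩
  · intro a _ b _ h
    exact Units.ext h
  · intro e he
    exact ⟨Units.mk0 e (Finset.mem_erase.1 he).1, Finset.mem_univ _, rfl⟩
  · intro u _
    rfl

lemma VK_zero (i : ℕ) : VK F i 0 = 0 := by simp [VK]

lemma VK_snoc (i : ℕ) (d : Fin i → F) (e : F) :
    VK F (i+1) (Fin.snoc d e) = VK F i d + φF e * θK F ^ i := by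
  rw [VK, Fin.sum_univ_castSucc]
  simp [VK, Fin.snoc_castSucc, Fin.snoc_last]

lemma snoc_eq_zero (i : ℕ) (d : Fin i → F) (e : F) :
    Fin.snoc d e = (0 : Fin (i+1) → F) ↔ d = 0 ∧ e = 0 := by
  constructor
  · intro h
    constructor
    · funext k
      have := congrFun h k.castSucc
      simpa [Fin.snoc_castSucc] using this
    · have := congrFun h (Fin.last i)
      simpa [Fin.snoc_last] using this
  · rintro ⟨rfl, rfl⟩
    funext k
    induction k using Fin.lastCases with
    | last => simp [Fin.snoc_last]
    | cast k => simp [Fin.snoc_castSucc]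

lemma prod_scale (i : ℕ) (e : F) (he : e ≠ 0) :
    ∏ d : Fin i → F, (VK F i d + φF e * θK F ^ i) = φF e * Pim F i := by
  rw [← Equiv.prod_comp (Equiv.piCongrRight (fun _ : Fin i => Equiv.mulLeft₀ e he))
      (fun d => VK F i d + φF e * θK F ^ i)]
  have key : ∀ d : Fin i → F,
      VK F i ((Equiv.piCongrRight (fun _ : Fin i => Equiv.mulLeft₀ e he)) d)
        + φF e * θK F ^ i = φF e * vK F i d := by
    intro d
    have : (Equiv.piCongrRight (fun _ : Fin i => Equiv.mulLeft₀ e he)) d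
        = fun k => e * d k := rfl
    rw [this, VK_smul, vK_eq]
    ring
  rw [Finset.prod_congr rfl fun d _ => key d, Finset.prod_mul_distrib, Finset.prod_const,
    card_univ, card_fun_fin, ← map_pow, FiniteField.pow_card_pow, Pim]

lemma δm_eq_prod_if (i : ℕ) :
    δm F i = ∏ d : Fin i → F, (if d = 0 then 1 else VK F i d) := by
  rw [δm, ← Finset.prod_erase (univ : Finset (Fin i → F)) (by simp :
    (if (0 : Fin i → F) = 0 then (1 : RatFunc F) else VK F i 0) = 1)]
  exact Finset.prod_congr rfl fun c hc => (if_neg (Finset.mem_erase.1 hc).1).symm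

lemma δm_succ (i : ℕ) : δm F (i+1) = -((Pim F i) ^ (q - 1)) * δm F i := by
  rw [δm_eq_prod_if, ← Equiv.prod_comp (Fin.snocEquiv (fun _ => F))
    (fun c => if c = 0 then 1 else VK F (i+1) c), Fintype.prod_prod_type]
  have hterm : ∀ (e : F) (d : Fin i → F),
      (if (Fin.snocEquiv (fun _ => F)) (e, d) = 0 then (1 : RatFunc F)
        else VK F (i+1) ((Fin.snocEquiv (fun _ => F)) (e, d)))
      = if e = 0 then (if d = 0 then 1 else VK F i d)
        else (VK F i d + φF e * θK F ^ i) := by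
    intro e d
    have hsnoc : (Fin.snocEquiv (fun _ => F)) (e, d) = Fin.snoc d e := rfl
    rw [hsnoc]
    by_cases he : e = 0 <;> by_cases hd : d = 0
    · subst he; subst hd
      rw [if_pos (by rw [snoc_eq_zero]; exact ⟨rfl, rfl⟩), if_pos rfl, if_pos rfl]
    · subst he
      rw [if_neg (by rw [snoc_eq_zero]; tauto), if_pos rfl, if_neg hd, VK_snoc]
      simp
    · subst hd
      rw [if_neg (by rw [snoc_eq_zero]; tauto), if_neg he, VK_snoc, VK_zero]
    · rw [if_neg (by rw [snoc_eq_zero]; tauto), if_neg he, VK_snoc]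
  rw [Finset.prod_congr rfl (fun e (_ : e ∈ univ) => Finset.prod_congr rfl
    (fun d (_ : d ∈ univ) => hterm e d))]
  rw [← Finset.mul_prod_erase univ _ (Finset.mem_univ (0 : F))]
  have hfirst : (∏ d : Fin i → F, if (0 : F) = 0 then (if d = 0 then 1 else VK F i d)
      else (VK F i d + φF (0:F) * θK F ^ i)) = δm F i := by
    rw [Finset.prod_congr rfl (fun d (_ : d ∈ univ) => if_pos rfl), ← δm_eq_prod_if]
  rw [hfirst]
  have hsecond : ∏ e ∈ (univ : Finset F).erase 0,
      (∏ d : Fin i → F, if e = 0 then (if d = 0 then 1 else VK F i d)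
        else (VK F i d + φF e * θK F ^ i))
      = -((Pim F i) ^ (q - 1)) := by
    have h1 : ∀ e ∈ (univ : Finset F).erase 0,
        (∏ d : Fin i → F, if e = 0 then (if d = 0 then 1 else VK F i d)
          else (VK F i d + φF e * θK F ^ i)) = φF e * Pim F i := by
      intro e he
      rw [Finset.prod_congr rfl (fun d (_ : d ∈ univ) =>
        if_neg (Finset.mem_erase.1 he).1), prod_scale F i e (Finset.mem_erase.1 he).1]
    rw [Finset.prod_congr rfl h1, Finset.prod_mul_distrib, Finset.prod_const,
      Finset.card_erase_of_mem (Finset.mem_univ _), card_univ, ← map_prod,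
      prod_nonzero_eq_neg_one]
    simp
  rw [hsecond]
  ring

lemma Lp_succ (i : ℕ) : Lp F (i+1) = -((X ^ q ^ (i+1) - X) * Lp F i) := by
  rw [Lp, Lp, Finset.prod_Icc_succ_top (by omega : 1 ≤ i + 1)]
  ring

lemma tK_zero : tK F 0 = θK F := by simp [tK]

lemma phi_Lp_succ (i : ℕ) : φ (Lp F (i+1)) = -((tK F (i+1) - tK F 0) * φ (Lp F i)) := by
  have hX : φ (X : Polynomial F) = θK F := rfl
  rw [Lp_succ, map_neg, map_mul, map_sub, ← tK_eq_phi, hX, tK_zero]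

lemma tK_pow_q (n : ℕ) : (tK F n) ^ q = tK F (n+1) := by
  rw [tK, tK, ← pow_mul, ← pow_succ]

lemma frob_factor (n ν : ℕ) : (tK F n - tK F ν) ^ q = tK F (n+1) - tK F (ν+1) := by
  rw [frob_sub, tK_pow_q, tK_pow_q]

lemma key_L : ∀ i : ℕ, δm F i * φ (Lp F i) = Pim F i
  | 0 => by
      have hδ : δm F 0 = 1 := by
        rw [δm]
        have he : (univ : Finset (Fin 0 → F)).erase 0 = ∅ := by
          ext c
          simp [Subsingleton.elim c 0]
        rw [he, Finset.prod_empty]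
      have hL : Lp F 0 = 1 := by simp [Lp]
      have hP : Pim F 0 = 1 := by
        rw [Pim]
        apply Finset.prod_eq_one
        intro c _
        rw [vK, aPoly]
        simp [PV]
      rw [hδ, hL, hP, one_mul, map_one]
  | (i+1) => by
      have ih := key_L i
      have hq1 : q - 1 + 1 = q := by have := hq2 F; omega
      rw [δm_succ, phi_Lp_succ]
      calc -(Pim F i ^ (q-1)) * δm F i * -((tK F (i+1) - tK F 0) * φ (Lp F i))
          = (tK F (i+1) - tK F 0) * (Pim F i ^ (q-1) * (δm F i * φ (Lp F i))) := by ring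
        _ = (tK F (i+1) - tK F 0) * (Pim F i ^ (q-1) * Pim F i) := by rw [ih]
        _ = (tK F (i+1) - tK F 0) * Pim F i ^ q := by rw [← pow_succ, hq1]
        _ = Pim F (i+1) := by
            rw [anchor F (i+1), anchor F i, Finset.prod_range_succ', ← Finset.prod_pow,
              Finset.prod_congr rfl (fun ν (_ : ν ∈ range i) => frob_factor F i ν)]
            ring

def Bco (i j μr : ℕ) : RatFunc F := ((taylor (tK F μr)) (Pprod F i)).coeff j

def Cco (i j μr ν : ℕ) : RatFunc F :=
  ((taylor (tK F μr)) (Lagrange.basis (range i) (tK F) ν)).coeff j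

lemma hasse_twist (i jr μr : ℕ) (a : Polynomial F) (hm : a.Monic) (hd : a.natDegree = i) :
    φ (hasseDeriv jr a) ^ q ^ μr
      = Bco F i jr μr + ∑ ν ∈ range i, φ a ^ q ^ ν * Cco F i jr μr ν := by
  have h := congrArg (fun P => ((taylor (tK F μr)) P).coeff jr) (interp F i a hm hd)
  have hL : ((taylor (tK F μr)) (a.map (φF))).coeff jr = φ (hasseDeriv jr a) ^ q ^ μr := by
    rw [taylor_coeff]
    have hmap : hasseDeriv jr (a.map (φF)) = (hasseDeriv jr a).map (φF) := by
      ext n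
      rw [hasseDeriv_coeff, coeff_map, coeff_map, hasseDeriv_coeff]
      simp
    rw [hmap, eval_map_tK]
  rw [hL] at h
  rw [h, map_add, coeff_add]
  congr 1
  rw [map_sum, finset_sum_coeff]
  refine Finset.sum_congr rfl fun ν _ => ?_
  have hC : (taylor (tK F μr)) (C (φ a ^ q ^ ν) * Lagrange.basis (range i) (tK F) ν)
      = C (φ a ^ q ^ ν) * (taylor (tK F μr)) (Lagrange.basis (range i) (tK F) ν) := by
    rw [taylor_apply, taylor_apply, mul_comp, C_comp]
  rw [hC, coeff_C_mul]
  rfl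

def Gpoly (i jr μr : ℕ) : Polynomial (RatFunc F) :=
  C (Bco F i jr μr) + ∑ ν ∈ range i, C (Cco F i jr μr ν) * X ^ q ^ ν

lemma Gpoly_eval (i jr μr : ℕ) (a : Polynomial F) (hm : a.Monic) (hd : a.natDegree = i) :
    (Gpoly F i jr μr).eval (φ a) = φ (hasseDeriv jr a) ^ q ^ μr := by
  rw [hasse_twist F i jr μr a hm hd, Gpoly, eval_add, eval_C, eval_finset_sum]
  congr 1
  exact Finset.sum_congr rfl fun ν _ => by rw [eval_mul, eval_C, eval_pow, eval_X]; ring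

lemma Gpoly_eval_zero (i jr μr : ℕ) : (Gpoly F i jr μr).eval 0 = Bco F i jr μr := by
  rw [Gpoly, eval_add, eval_C, eval_finset_sum]
  have : ∀ ν ∈ range i, eval 0 (C (Cco F i jr μr ν) * X ^ q ^ ν) = 0 := by
    intro ν _
    rw [eval_mul, eval_pow, eval_X, zero_pow (pow_pos (show 0 < q by have := hq2 F; omega) ν).ne',
      mul_zero]
  rw [Finset.sum_congr rfl this, Finset.sum_const_zero, add_zero]

lemma Gpoly_natDegree_le (i jr μr : ℕ) (hi : 1 ≤ i) :
    (Gpoly F i jr μr).natDegree ≤ q ^ (i - 1) := by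
  refine le_trans (natDegree_add_le _ _) (max_le (by simp) ?_)
  refine le_trans (natDegree_sum_le _ _) ?_
  rw [Finset.fold_max_le]
  refine ⟨Nat.zero_le _, fun ν hν => ?_⟩
  refine le_trans (natDegree_C_mul_le _ _) ?_
  rw [natDegree_X_pow]
  exact Nat.pow_le_pow_right (by have := hq2 F; omega)
    (by have := Finset.mem_range.1 hν; omega)

lemma Bco_eq (i jr μr : ℕ) (hj : jr ≤ i) :
    Bco F i jr μr
      = (-1 : RatFunc F) ^ (i - jr)
          * esymF (range i) (fun ν => tK F ν - tK F μr) (i - jr) := by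
  rw [Bco]
  have ht : (taylor (tK F μr)) (Pprod F i)
      = ∏ ν ∈ range i, (X + C (tK F μr - tK F ν)) := by
    rw [Pprod, taylor_apply, Polynomial.prod_comp]
    refine Finset.prod_congr rfl fun ν _ => ?_
    rw [sub_comp, X_comp, C_comp, map_sub]
    ring
  rw [ht, Finset.prod_X_add_C_coeff _ _ (by rwa [card_range]), card_range, esymF,
    Finset.mul_sum]
  refine Finset.sum_congr rfl fun S hS => ?_
  have hcard : S.card = i - jr := (Finset.mem_powersetCard.1 hS).2
  have hfac : ∀ ν ∈ S, tK F μr - tK F ν = -1 * (tK F ν - tK F μr) := fun ν _ => by ring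
  rw [Finset.prod_congr rfl hfac, Finset.prod_mul_distrib, Finset.prod_const, hcard]

theorem main_aux (i : ℕ) (hi : 1 ≤ i) (s : ℕ) (hs1 : 1 ≤ s) (hs2 : s ≤ q - 1)
    (μ : Fin s → ℕ) (j : Fin s → ℕ) (hj : ∀ r, j r ≤ i) :
    (∑ᶠ a ∈ {a : Polynomial F | a.Monic ∧ a.natDegree = i},
        (∏ r : Fin s, φ (hasseDeriv (j r) a) ^ q ^ μ r) / φ a)
      = (φ (Lp F i))⁻¹
          * ∏ r : Fin s,
              (-1 : RatFunc F) ^ (i - j r)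
                * esymF (range i) (fun ν => θK F ^ q ^ ν - θK F ^ q ^ μ r) (i - j r) := by
  have hset : {a : Polynomial F | a.Monic ∧ a.natDegree = i}
      = ↑((univ : Finset (Fin i → F)).image (aPoly F i)) := by
    ext a
    simp only [Set.mem_setOf_eq, Finset.coe_image, coe_univ, Set.image_univ, Set.mem_range]
    rw [mem_aPoly_iff]
  rw [hset, finsum_mem_coe_finset, Finset.sum_image (fun c _ d _ h => aPoly_injective F i h)]
  set g : Polynomial (RatFunc F) := ∏ r : Fin s, Gpoly F i (j r) (μ r) with hg
  have hgeval : ∀ c : Fin i → F,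
      (∏ r : Fin s, φ (hasseDeriv (j r) (aPoly F i c)) ^ q ^ μ r) = g.eval (vK F i c) := by
    intro c
    rw [hg, eval_prod]
    exact Finset.prod_congr rfl fun r _ =>
      (Gpoly_eval F i (j r) (μ r) _ (aPoly_monic F i c) (aPoly_natDegree F i c)).symm
  have hdeg : g.degree < ((q ^ i : ℕ) : WithBot ℕ) := by
    have h1 : g.natDegree ≤ s * q ^ (i - 1) := by
      refine le_trans (natDegree_prod_le _ _) ?_
      calc ∑ r : Fin s, (Gpoly F i (j r) (μ r)).natDegree
          ≤ ∑ _r : Fin s, q ^ (i - 1) :=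
            Finset.sum_le_sum fun r _ => Gpoly_natDegree_le F i (j r) (μ r) hi
        _ = s * q ^ (i - 1) := by
            rw [Finset.sum_const, card_univ, Fintype.card_fin, smul_eq_mul]
    have h2 : s * q ^ (i - 1) < q ^ i := by
      have hq := hq2 F
      calc s * q ^ (i - 1) ≤ (q - 1) * q ^ (i - 1) :=
            Nat.mul_le_mul_right _ hs2
        _ < q * q ^ (i - 1) :=
            Nat.mul_lt_mul_of_lt_of_le (by omega) le_rfl
              (pow_pos (by omega) _)
        _ = q ^ i := by
            rw [← pow_succ']
            congr 1
            omega
    refine lt_of_le_of_lt degree_le_natDegree ?_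
    exact_mod_cast lt_of_le_of_lt h1 h2
  rw [Finset.sum_congr rfl fun c _ => by rw [hgeval c]]
  rw [show (fun c => g.eval (vK F i c) / φ (aPoly F i c))
    = fun c => g.eval (vK F i c) / vK F i c from rfl]
  rw [core F i g hdeg]
  have hLne : φ (Lp F i) ≠ 0 := by
    intro h
    have := key_L F i
    rw [h, mul_zero] at this
    exact Pim_ne_zero F i this.symm
  have hratio : δm F i / Pim F i = (φ (Lp F i))⁻¹ := by
    rw [← key_L F i]
    exact div_mul_cancel_left₀ (δm_ne_zero F i) _
  rw [hratio]
  congr 1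
  rw [hg, eval_prod]
  refine Finset.prod_congr rfl fun r _ => ?_
  rw [Gpoly_eval_zero, Bco_eq F i (j r) (μ r) (hj r)]
  rfl

end Stmt9Aux

set_option linter.unusedSectionVars false in
/-- Let `i ≥ 1` and `1 ≤ s ≤ q−1`.  For any `μ_1,…,μ_s ≥ 0` and `0 ≤ j_1,…,j_s ≤ i`,
`Σ_{a ∈ A_{i+}} (∂_θ^{j_1}(a)^{q^{μ_1}} ··· ∂_θ^{j_s}(a)^{q^{μ_s}}) / a`
`= (1/L_i) · Π_{r=1}^{s} (−1)^{i−j_r} e_{i,i−j_r}(θ−θ^{q^{μ_r}}, θ^q−θ^{q^{μ_r}}, …, θ^{q^{i−1}}−θ^{q^{μ_r}})`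
in `K = 𝔽_q(θ)`, where `A_{i+}` is the set of monic polynomials of degree `i` in `A = 𝔽_q[θ]`
and `∂_θ^j` is the `j`-th hyperderivative (Hasse derivative). -/
theorem stmt9 (i : ℕ) (hi : 1 ≤ i) (s : ℕ) (hs1 : 1 ≤ s) (hs2 : s ≤ q - 1)
    (μ : Fin s → ℕ) (j : Fin s → ℕ) (hj : ∀ r, j r ≤ i) :
    (∑ᶠ a ∈ {a : Polynomial F | a.Monic ∧ a.natDegree = i},
        (∏ r : Fin s,
            algebraMap (Polynomial F) (RatFunc F) (hasseDeriv (j r) a) ^ q ^ μ r)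
          / algebraMap (Polynomial F) (RatFunc F) a)
      = (algebraMap (Polynomial F) (RatFunc F) (Lp F i))⁻¹
          * ∏ r : Fin s,
              (-1 : RatFunc F) ^ (i - j r)
                * esymF (range i) (fun ν => θK F ^ q ^ ν - θK F ^ q ^ μ r) (i - j r) := by
  haveI : DecidableEq F := Classical.decEq F
  exact Stmt9Aux.main_aux F i hi s hs1 hs2 μ j hj

end
end

section
/- Let i ≥ 1, 1 ≤ s ≤ q−1, and 0 ≤ j ≤ i. Then Σ_{a ∈ A_{i+}} ∂_θ^j(a)^s / a = ( (−1)^{s(i−j)} / L_i ) · e_{i−1,i−j}([1],[2],…,[i−1])^s in K = 𝔽_q(θ). -/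
open Polynomial Finset

noncomputable section

variable (F : Type*) [Field F] [Fintype F]

local notation "q" => Fintype.card F

set_option linter.unusedSectionVars false
set_option linter.unusedVariables false
set_option maxHeartbeats 1000000


section Mach
variable {L : Type*} [Field L]

def Esp (Q : ℕ) : ℕ → (ℕ → L) → L → L
  | 0, _, z => z
  | d+1, u, z =>
      Esp Q d (fun t => u (t+1)) z ^ Q
        - Esp Q d (fun t => u (t+1)) (u 0) ^ (Q - 1) * Esp Q d (fun t => u (t+1)) z

def Msp (Q : ℕ) : ℕ → (ℕ → L) → L
  | 0, _ => 1
  | d+1, u => -Esp Q d (fun t => u (t+1)) (u 0) ^ (Q - 1) * Msp Q d (fun t => u (t+1))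

def Psp (Q : ℕ) : ℕ → (ℕ → L) → (ℕ → L) → L → L
  | 0, _, _, _ => 0
  | d+1, u, y, z =>
      Psp Q d (fun t => u (t+1)) (fun t => y (t+1)) z
        + Esp Q d (fun t => u (t+1)) z / Esp Q d (fun t => u (t+1)) (u 0)
          * (y 0 - Psp Q d (fun t => u (t+1)) (fun t => y (t+1)) (u 0))

variable {F}

lemma one_lt_q : 1 < q := Fintype.one_lt_card

lemma sigma_pow_q (σ : F →+* L) (c : F) : σ c ^ q = σ c := by
  rw [← map_pow, FiniteField.pow_card]

lemma q_cast_zero (σ : F →+* L) : ((q : ℕ) : L) = 0 := by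
  rw [← map_natCast σ, Nat.cast_card_eq_zero, map_zero]

lemma exists_char (σ : F →+* L) : ∃ p n : ℕ, Nat.Prime p ∧ CharP L p ∧ q = p ^ n := by
  have hcp : CharP F (ringChar F) := ringChar.charP F
  have hp : (ringChar F).Prime := CharP.char_is_prime F (ringChar F)
  haveI : Fact (ringChar F).Prime := ⟨hp⟩
  obtain ⟨n, hn⟩ := FiniteField.card F (ringChar F)
  exact ⟨ringChar F, n, hp, charP_of_injective_ringHom σ.injective _, by exact_mod_cast hn.2⟩

lemma add_pow_q (σ : F →+* L) (x y : L) : (x + y) ^ q = x ^ q + y ^ q := by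
  obtain ⟨p, n, hp, hc, hq⟩ := exists_char σ
  haveI : Fact p.Prime := ⟨hp⟩
  rw [hq]
  exact add_pow_char_pow x y p n

lemma sum_pow_q (σ : F →+* L) {ι : Type*} (t : Finset ι) (f : ι → L) :
    (∑ i ∈ t, f i) ^ q = ∑ i ∈ t, f i ^ q := by
  obtain ⟨p, n, hp, hc, hq⟩ := exists_char σ
  haveI : Fact p.Prime := ⟨hp⟩
  rw [hq]
  exact sum_pow_char_pow p n t f

lemma prod_X_sub_C_eq : (∏ a : F, (X - C a)) = X ^ q - X := by
  have h2 : 1 < q := one_lt_q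
  have hq1 : q - 1 + 1 = q := by omega
  have hmonic : (X ^ q - X : F[X]).Monic := by
    apply monic_X_pow_sub
    rw [degree_X]
    exact_mod_cast h2
  have hdeg : (X ^ q - X : F[X]).natDegree = q := by
    have hlt : (X:F[X]).natDegree < (X ^ q : F[X]).natDegree := by
      rw [natDegree_X, natDegree_X_pow]; omega
    rw [natDegree_sub_eq_left_of_natDegree_lt hlt, natDegree_X_pow]
  have h := prod_multiset_X_sub_C_of_monic_of_roots_card_eq hmonic
    (by rw [FiniteField.roots_X_pow_card_sub_X, hdeg]; simp)
  rw [FiniteField.roots_X_pow_card_sub_X] at h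
  exact h ▸ rfl

lemma prod_lin (σ : F →+* L) (z : L) : (∏ a : F, (z - σ a)) = z ^ q - z := by
  have h := congrArg (eval₂ σ z) (prod_X_sub_C_eq (F := F))
  rw [eval₂_finset_prod] at h
  simpa using h


section
variable (σ : F →+* L)

lemma sum_prod_erase_poly [DecidableEq F] :
    (∑ a : F, ∏ b ∈ univ.erase a, (X - C b)) = (-1 : F[X]) := by
  have h1 : derivative (∏ a : F, (X - C a)) = -1 := by
    rw [prod_X_sub_C_eq, derivative_sub, derivative_X_pow, derivative_X]
    rw [Nat.cast_card_eq_zero, map_zero, zero_mul, zero_sub]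
  have h2 : derivative (∏ a : F, (X - C a)) = ∑ a : F, ∏ b ∈ univ.erase a, (X - C b) := by
    rw [Finset.prod_eq_multiset_prod, derivative_prod]
    rw [Finset.sum_eq_multiset_sum]
    congr 1
    apply Multiset.map_congr rfl
    intro a _
    rw [derivative_sub, derivative_X, derivative_C, sub_zero, mul_one,
      Finset.prod_eq_multiset_prod, Finset.erase_val]
  rw [← h2, h1]

lemma sum_prod_erase [DecidableEq F] (z : L) :
    (∑ a : F, ∏ b ∈ univ.erase a, (z - σ b)) = -1 := by
  have h := congrArg (eval₂ σ z) (sum_prod_erase_poly (F := F))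
  rw [eval₂_finset_sum] at h
  simp only [eval₂_finset_prod, eval₂_sub, eval₂_X, eval₂_C] at h
  simpa using h

lemma sum_inv_sub (z : L) (hz : ∀ a : F, z - σ a ≠ 0) :
    (∑ a : F, (z - σ a)⁻¹) = -(z ^ q - z)⁻¹ := by
  classical
  have hP : (∏ a : F, (z - σ a)) = z ^ q - z := prod_lin σ z
  have key : ∀ a : F, (z - σ a)⁻¹ = (∏ b ∈ univ.erase a, (z - σ b)) / (z ^ q - z) := by
    intro a
    rw [← hP, ← Finset.mul_prod_erase univ _ (mem_univ a)]
    rw [eq_div_iff (by exact mul_ne_zero (hz a) (prod_ne_zero_iff.2 fun b _ => hz b))]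
    exact inv_mul_cancel_left₀ (hz a) _
  simp only [key]
  rw [← Finset.sum_div, sum_prod_erase σ z]
  rw [neg_div, one_div]

lemma sum_inv_add (z : L) (hz : ∀ a : F, z + σ a ≠ 0) :
    (∑ a : F, (z + σ a)⁻¹) = -(z ^ q - z)⁻¹ := by
  classical
  have h : ∀ a : F, z - σ a ≠ 0 := fun a => by
    have := hz (-a); rwa [map_neg, ← sub_eq_add_neg] at this
  rw [← sum_inv_sub σ z h]
  apply Fintype.sum_equiv (Equiv.neg F)
  intro a
  simp [sub_eq_add_neg]

lemma prod_lin_add (z : L) : (∏ a : F, (z + σ a)) = z ^ q - z := by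
  classical
  rw [← prod_lin σ z]
  apply Fintype.prod_equiv (Equiv.neg F)
  intro a
  simp [sub_eq_add_neg]

lemma sum_powsmall (m : ℕ) (hm : m < q - 1) (z : L) :
    (∑ a : F, (z + σ a) ^ m) = 0 := by
  have expand : ∀ a : F, (z + σ a) ^ m
      = ∑ k ∈ range (m + 1), z ^ k * σ a ^ (m - k) * (m.choose k : L) := fun a => add_pow z (σ a) m
  simp only [expand]
  rw [Finset.sum_comm]
  apply Finset.sum_eq_zero
  intro k hk
  have hsum : (∑ a : F, σ a ^ (m - k)) = 0 := by
    have : (∑ a : F, a ^ (m - k)) = 0 :=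
      FiniteField.sum_pow_lt_card_sub_one F (m - k) (by omega)
    calc (∑ a : F, σ a ^ (m - k)) = σ (∑ a : F, a ^ (m - k)) := by
          rw [map_sum]; exact Finset.sum_congr rfl fun a _ => (map_pow σ a _).symm
    _ = 0 := by rw [this, map_zero]
  calc (∑ a : F, z ^ k * σ a ^ (m - k) * (m.choose k : L))
      = z ^ k * (∑ a : F, σ a ^ (m - k)) * (m.choose k : L) := by
        rw [← Finset.sum_mul, ← Finset.mul_sum]
  _ = 0 := by rw [hsum, mul_zero, zero_mul]

lemma key_sum_pow_div (k : ℕ) (hk : k ≤ q - 1) (z : L) (hz : ∀ a : F, z + σ a ≠ 0) :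
    (∑ a : F, σ a ^ k / (z + σ a)) = -(-z) ^ k / (z ^ q - z) := by
  classical
  have expand : ∀ a : F, σ a ^ k
      = ∑ r ∈ range (k + 1), (z + σ a) ^ r * (-z) ^ (k - r) * (k.choose r : L) := by
    intro a
    have h := add_pow (z + σ a) (-z) k
    rw [show z + σ a + -z = σ a by ring] at h
    exact h
  have expand2 : ∀ a : F, σ a ^ k / (z + σ a)
      = ∑ r ∈ range (k + 1), (z + σ a) ^ r / (z + σ a) * ((-z) ^ (k - r) * (k.choose r : L)) := by
    intro a
    rw [expand a, Finset.sum_div]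
    exact Finset.sum_congr rfl fun r _ => by ring
  simp only [expand2]
  rw [Finset.sum_comm]
  rw [Finset.sum_range_succ']
  have hzero : ∀ r ∈ range k, (∑ a : F, (z + σ a) ^ (r + 1) / (z + σ a) * ((-z) ^ (k - (r + 1)) * (k.choose (r + 1) : L))) = 0 := by
    intro r hr
    have hr' : r < q - 1 := by
      have := mem_range.1 hr; omega
    have : ∀ a : F, (z + σ a) ^ (r + 1) / (z + σ a) = (z + σ a) ^ r := by
      intro a
      rw [pow_succ, mul_div_assoc, div_self (hz a), mul_one]
    simp only [this]
    rw [← Finset.sum_mul, sum_powsmall σ r hr', zero_mul]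
  rw [Finset.sum_eq_zero hzero, zero_add]
  have : ∀ a : F, (z + σ a) ^ 0 / (z + σ a) * ((-z) ^ (k - 0) * (k.choose 0 : L))
      = (z + σ a)⁻¹ * (-z) ^ k := by
    intro a
    simp [one_div]
  simp only [this]
  rw [← Finset.sum_mul, sum_inv_add σ z hz]
  ring

lemma qm1_succ : q - 1 + 1 = q := by have := one_lt_q (F := F); omega

lemma pow_q_eq (U : L) : U ^ q = U ^ (q - 1) * U := by
  rw [← pow_succ, qm1_succ]

lemma prod_aff (W U : L) : (∏ a : F, (W + σ a * U)) = W ^ q - U ^ (q - 1) * W := by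
  classical
  rcases eq_or_ne U 0 with hU | hU
  · subst hU
    simp only [mul_zero, add_zero, Finset.prod_const, Finset.card_univ]
    rw [zero_pow (by have := one_lt_q (F := F); omega), zero_mul, sub_zero]
  · have h1 : ∀ a : F, W + σ a * U = (W / U + σ a) * U := by
      intro a; field_simp
    simp only [h1]
    rw [Finset.prod_mul_distrib, Finset.prod_const, Finset.card_univ, prod_lin_add σ]
    rw [div_pow, pow_q_eq U]
    field_simp
 
lemma oneDim (s : ℕ) (hs : s ≤ q - 1) (Xx Yy W U : L) (hU : U ≠ 0)
    (hW : ∀ a : F, W + σ a * U ≠ 0) :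
    (∑ a : F, (Xx + σ a * Yy) ^ s / (W + σ a * U))
      = -U ^ (q - 1) * (Xx - W / U * Yy) ^ s / (W ^ q - U ^ (q - 1) * W) := by
  classical
  set z := W / U with hzdef
  have hWU : ∀ a : F, W + σ a * U = (z + σ a) * U := by
    intro a; rw [hzdef]; field_simp
  have hz : ∀ a : F, z + σ a ≠ 0 := by
    intro a h
    apply hW a
    rw [hWU a, h, zero_mul]
  have hzq : z ^ q - z ≠ 0 := by
    rw [← prod_lin_add σ z]
    exact prod_ne_zero_iff.2 fun a _ => hz a
  have expand : ∀ a : F, (Xx + σ a * Yy) ^ s / (W + σ a * U)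
      = ∑ k ∈ range (s + 1), Yy ^ k * Xx ^ (s - k) * (s.choose k : L) / U * (σ a ^ k / (z + σ a)) := by
    intro a
    rw [add_comm Xx (σ a * Yy), add_pow, hWU a, Finset.sum_div]
    apply Finset.sum_congr rfl
    intro k hk
    rw [mul_pow]
    field_simp
  simp only [expand]
  rw [Finset.sum_comm]
  have inner : ∀ k ∈ range (s + 1),
      (∑ a : F, Yy ^ k * Xx ^ (s - k) * (s.choose k : L) / U * (σ a ^ k / (z + σ a)))
        = -(1 / (U * (z ^ q - z))) * ((-z * Yy) ^ k * Xx ^ (s - k) * (s.choose k : L)) := by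
    intro k hk
    rw [← Finset.mul_sum, key_sum_pow_div σ k (by have := mem_range.1 hk; omega) z hz]
    rw [mul_pow]
    field_simp
  rw [Finset.sum_congr rfl inner, ← Finset.mul_sum, ← add_pow]
  have hden : W ^ q - U ^ (q - 1) * W = (z ^ q - z) * U ^ q := by
    rw [← prod_aff σ W U]
    simp only [hWU]
    rw [Finset.prod_mul_distrib, Finset.prod_const, Finset.card_univ, prod_lin_add σ]
  rw [hden, pow_q_eq U]
  have : -z * Yy + Xx = Xx - z * Yy := by ring
  rw [this]
  field_simp

lemma esp_add (σ : F →+* L) (d : ℕ) (u : ℕ → L) (z z' : L) :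
    Esp q d u (z + z') = Esp q d u z + Esp q d u z' := by
  induction d generalizing u with
  | zero => rfl
  | succ d ih =>
    simp only [Esp]
    rw [ih, add_pow_q σ]
    ring

lemma esp_smul (σ : F →+* L) (d : ℕ) (u : ℕ → L) (c : F) (z : L) :
    Esp q d u (σ c * z) = σ c * Esp q d u z := by
  induction d generalizing u with
  | zero => rfl
  | succ d ih =>
    simp only [Esp]
    rw [ih, mul_pow, sigma_pow_q σ]
    ring

lemma esp_affine (σ : F →+* L) (d : ℕ) (u : ℕ → L) (w : L) (a : F) (v : L) :
    Esp q d u (w + σ a * v) = Esp q d u w + σ a * Esp q d u v := by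
  rw [esp_add σ, esp_smul σ]

lemma esp_affine_sub (σ : F →+* L) (d : ℕ) (u : ℕ → L) (w : L) (a : F) (v : L) :
    Esp q d u (w - σ a * v) = Esp q d u w - σ a * Esp q d u v := by
  have h := esp_affine σ d u w (-a) v
  rw [map_neg] at h
  rw [sub_eq_add_neg, sub_eq_add_neg, ← neg_mul, h, neg_mul]

lemma prod_aff_sub (σ : F →+* L) (W U : L) : (∏ a : F, (W - σ a * U)) = W ^ q - U ^ (q - 1) * W := by
  classical
  rw [← prod_aff σ W U]
  apply Fintype.prod_equiv (Equiv.neg F)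
  intro a
  simp [sub_eq_add_neg]

lemma cons_sum (σ : F →+* L) (d : ℕ) (a : F) (c : Fin d → F) (v : ℕ → L) :
    (∑ t : Fin (d+1), σ ((Fin.cons a c : Fin (d+1) → F) t) * v (t : ℕ))
      = σ a * v 0 + ∑ t : Fin d, σ (c t) * v ((t : ℕ) + 1) := by
  rw [Fin.sum_univ_succ]
  simp [Fin.cons_zero, Fin.cons_succ]

lemma esp_prod (σ : F →+* L) (d : ℕ) (u : ℕ → L) (z : L) :
    Esp q d u z = ∏ c : Fin d → F, (z - ∑ t : Fin d, σ (c t) * u (t : ℕ)) := by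
  classical
  induction d generalizing u z with
  | zero => simp [Esp]
  | succ d ih =>
    have hsplit : (∏ c : Fin (d+1) → F, (z - ∑ t : Fin (d+1), σ (c t) * u (t : ℕ)))
        = ∏ a : F, ∏ c : Fin d → F,
            ((z - σ a * u 0) - ∑ t : Fin d, σ (c t) * u ((t : ℕ) + 1)) := by
      rw [← Equiv.prod_comp (Fin.consEquiv fun _ : Fin (d+1) => F)
        (fun c => (z - ∑ t : Fin (d+1), σ (c t) * u (t : ℕ)))]
      rw [Fintype.prod_prod_type]
      apply Finset.prod_congr rfl; intro a _
      apply Finset.prod_congr rfl; intro c _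
      have hthis : (Fin.consEquiv fun _ : Fin (d+1) => F) (a, c) = (Fin.cons a c : Fin (d+1) → F) := rfl
      rw [hthis, cons_sum σ, sub_sub]
    rw [hsplit]
    simp only [Esp]
    have step1 : ∀ a : F,
        (∏ c : Fin d → F, ((z - σ a * u 0) - ∑ t : Fin d, σ (c t) * u ((t : ℕ) + 1)))
          = Esp q d (fun t => u (t+1)) z - σ a * Esp q d (fun t => u (t+1)) (u 0) := by
      intro a
      rw [← ih (fun t => u (t+1)) (z - σ a * u 0), esp_affine_sub σ]
    rw [Finset.prod_congr rfl fun a _ => step1 a, prod_aff_sub σ]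

lemma esp_vanish (σ : F →+* L) (d : ℕ) (u : ℕ → L) (j : ℕ) (hj : j < d) : Esp q d u (u j) = 0 := by
  classical
  rw [esp_prod σ]
  apply Finset.prod_eq_zero (Finset.mem_univ (fun t : Fin d => if (t : ℕ) = j then (1 : F) else 0))
  have hsum : (∑ t : Fin d, σ (if (t : ℕ) = j then (1 : F) else 0) * u (t : ℕ)) = u j := by
    rw [Finset.sum_eq_single (⟨j, hj⟩ : Fin d)]
    · simp
    · intro b _ hbj
      have : (b : ℕ) ≠ j := fun h => hbj (Fin.ext h)
      simp [this]
    · simp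
  rw [hsum, sub_self]

lemma psp_affine (σ : F →+* L) (d : ℕ) (u y : ℕ → L) (w : L) (a : F) (v : L) :
    Psp q d u y (w + σ a * v) = Psp q d u y w + σ a * Psp q d u y v := by
  induction d generalizing u y with
  | zero => simp [Psp]
  | succ d ih =>
    simp only [Psp]
    rw [ih, esp_affine σ]
    ring

lemma hind_tail (σ : F →+* L) (d : ℕ) (u : ℕ → L)
    (hind : ∀ c : Fin (d+1) → F, c ≠ 0 → (∑ t : Fin (d+1), σ (c t) * u (t : ℕ)) ≠ 0) :
    ∀ c : Fin d → F, c ≠ 0 → (∑ t : Fin d, σ (c t) * u ((t : ℕ) + 1)) ≠ 0 := by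
  intro c hc
  have h := hind (Fin.cons 0 c) (by
    intro h0
    apply hc
    funext t
    have := congrFun h0 t.succ
    simpa [Fin.cons_succ] using this)
  rw [cons_sum σ] at h
  simpa using h

lemma esp_head_ne (σ : F →+* L) (d : ℕ) (u : ℕ → L)
    (hind : ∀ c : Fin (d+1) → F, c ≠ 0 → (∑ t : Fin (d+1), σ (c t) * u (t : ℕ)) ≠ 0) :
    Esp q d (fun t => u (t+1)) (u 0) ≠ 0 := by
  classical
  rw [esp_prod σ]
  apply prod_ne_zero_iff.2
  intro c _
  have h := hind (Fin.cons 1 (fun t => -(c t))) (by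
    intro h0
    have := congrFun h0 0
    simp [Fin.cons_zero] at this)
  rw [cons_sum σ] at h
  intro heq
  apply h
  rw [map_one, one_mul]
  have : (∑ t : Fin d, σ (-(c t)) * u ((t : ℕ) + 1)) = -(∑ t : Fin d, σ (c t) * u ((t : ℕ) + 1)) := by
    rw [← Finset.sum_neg_distrib]
    exact Finset.sum_congr rfl fun t _ => by rw [map_neg, neg_mul]
  rw [this, ← sub_eq_add_neg]
  exact heq

lemma msp_ne (σ : F →+* L) (d : ℕ) (u : ℕ → L)
    (hind : ∀ c : Fin d → F, c ≠ 0 → (∑ t : Fin d, σ (c t) * u (t : ℕ)) ≠ 0) :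
    Msp q d u ≠ 0 := by
  induction d generalizing u with
  | zero => simp [Msp]
  | succ d ih =>
    simp only [Msp]
    exact mul_ne_zero (neg_ne_zero.2 (pow_ne_zero _ (esp_head_ne σ d u hind)))
      (ih (fun t => u (t+1)) (hind_tail σ d u hind))

theorem mainLemma (σ : F →+* L) (s : ℕ) (hs : s ≤ q - 1) (d : ℕ) :
    ∀ (u y : ℕ → L) (w x : L),
      (∀ c : Fin d → F, w + ∑ t : Fin d, σ (c t) * u (t : ℕ) ≠ 0) →
      (∀ c : Fin d → F, c ≠ 0 → (∑ t : Fin d, σ (c t) * u (t : ℕ)) ≠ 0) →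
      (∑ c : Fin d → F, (x + ∑ t : Fin d, σ (c t) * y (t : ℕ)) ^ s
          / (w + ∑ t : Fin d, σ (c t) * u (t : ℕ)))
        = Msp q d u / Esp q d u w * (x - Psp q d u y w) ^ s := by
  classical
  induction d with
  | zero =>
    intro u y w x hw _
    simp only [Esp, Msp, Psp]
    simp
    rw [div_eq_mul_inv, mul_comm]
  | succ d ih =>
    intro u y w x hw hind
    have hG : Esp q d (fun t => u (t+1)) (u 0) ≠ 0 := esp_head_ne σ d u hind
    have hsplit : (∑ c : Fin (d+1) → F, (x + ∑ t : Fin (d+1), σ (c t) * y (t : ℕ)) ^ s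
          / (w + ∑ t : Fin (d+1), σ (c t) * u (t : ℕ)))
        = ∑ a : F, ∑ c : Fin d → F,
            (x + σ a * y 0 + ∑ t : Fin d, σ (c t) * y ((t : ℕ) + 1)) ^ s
              / (w + σ a * u 0 + ∑ t : Fin d, σ (c t) * u ((t : ℕ) + 1)) := by
      rw [← Equiv.sum_comp (Fin.consEquiv fun _ : Fin (d+1) => F)
        (fun c => (x + ∑ t : Fin (d+1), σ (c t) * y (t : ℕ)) ^ s
          / (w + ∑ t : Fin (d+1), σ (c t) * u (t : ℕ)))]
      rw [Fintype.sum_prod_type]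
      apply Finset.sum_congr rfl; intro a _
      apply Finset.sum_congr rfl; intro c _
      have hcc : (Fin.consEquiv fun _ : Fin (d+1) => F) (a, c) = (Fin.cons a c : Fin (d+1) → F) := rfl
      rw [hcc, cons_sum σ, cons_sum σ, ← add_assoc, ← add_assoc]
    rw [hsplit]
    have hwa : ∀ (a : F) (c : Fin d → F),
        (w + σ a * u 0) + ∑ t : Fin d, σ (c t) * u ((t : ℕ) + 1) ≠ 0 := by
      intro a c
      have h := hw (Fin.cons a c)
      rw [cons_sum σ] at h
      rwa [← add_assoc] at h
    have hindt := hind_tail σ d u hind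
    have key : ∀ a : F,
        (∑ c : Fin d → F,
            (x + σ a * y 0 + ∑ t : Fin d, σ (c t) * y ((t : ℕ) + 1)) ^ s
              / (w + σ a * u 0 + ∑ t : Fin d, σ (c t) * u ((t : ℕ) + 1)))
          = Msp q d (fun t => u (t+1)) / Esp q d (fun t => u (t+1)) (w + σ a * u 0)
              * ((x + σ a * y 0) - Psp q d (fun t => u (t+1)) (fun t => y (t+1)) (w + σ a * u 0)) ^ s := by
      intro a
      exact ih (fun t => u (t+1)) (fun t => y (t+1)) (w + σ a * u 0) (x + σ a * y 0)
        (fun c => by simpa [add_assoc] using hwa a c) hindt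
    rw [Finset.sum_congr rfl fun a _ => key a]
    have hEa : ∀ a : F, Esp q d (fun t => u (t+1)) (w + σ a * u 0)
        = Esp q d (fun t => u (t+1)) w + σ a * Esp q d (fun t => u (t+1)) (u 0) :=
      fun a => esp_affine σ d _ w a (u 0)
    have hPa : ∀ a : F, Psp q d (fun t => u (t+1)) (fun t => y (t+1)) (w + σ a * u 0)
        = Psp q d (fun t => u (t+1)) (fun t => y (t+1)) w
            + σ a * Psp q d (fun t => u (t+1)) (fun t => y (t+1)) (u 0) :=
      fun a => psp_affine σ d _ _ w a (u 0)
    have hW' : ∀ a : F, Esp q d (fun t => u (t+1)) w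
        + σ a * Esp q d (fun t => u (t+1)) (u 0) ≠ 0 := by
      intro a
      rw [← hEa a, esp_prod σ]
      apply prod_ne_zero_iff.2
      intro c _
      have h := hwa a (fun t => -(c t))
      intro heq
      apply h
      have : (∑ t : Fin d, σ (-(c t)) * u ((t : ℕ) + 1))
          = -(∑ t : Fin d, σ (c t) * u ((t : ℕ) + 1)) := by
        rw [← Finset.sum_neg_distrib]
        exact Finset.sum_congr rfl fun t _ => by rw [map_neg, neg_mul]
      rw [this, ← sub_eq_add_neg]
      exact heq
    have step2 : ∀ a : F,
        Msp q d (fun t => u (t+1)) / Esp q d (fun t => u (t+1)) (w + σ a * u 0)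
            * ((x + σ a * y 0) - Psp q d (fun t => u (t+1)) (fun t => y (t+1)) (w + σ a * u 0)) ^ s
          = Msp q d (fun t => u (t+1))
              * (((x - Psp q d (fun t => u (t+1)) (fun t => y (t+1)) w)
                  + σ a * (y 0 - Psp q d (fun t => u (t+1)) (fun t => y (t+1)) (u 0))) ^ s
                / (Esp q d (fun t => u (t+1)) w + σ a * Esp q d (fun t => u (t+1)) (u 0))) := by
      intro a
      rw [hEa a, hPa a]
      have hb : (x + σ a * y 0) - (Psp q d (fun t => u (t+1)) (fun t => y (t+1)) w
          + σ a * Psp q d (fun t => u (t+1)) (fun t => y (t+1)) (u 0))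
          = (x - Psp q d (fun t => u (t+1)) (fun t => y (t+1)) w)
              + σ a * (y 0 - Psp q d (fun t => u (t+1)) (fun t => y (t+1)) (u 0)) := by ring
      rw [hb]
      ring
    rw [Finset.sum_congr rfl fun a _ => step2 a, ← Finset.mul_sum]
    rw [oneDim σ s hs _ _ _ _ hG hW']
    simp only [Esp, Msp, Psp]
    have hb2 : x - (Psp q d (fun t => u (t+1)) (fun t => y (t+1)) w
        + Esp q d (fun t => u (t+1)) w / Esp q d (fun t => u (t+1)) (u 0)
          * (y 0 - Psp q d (fun t => u (t+1)) (fun t => y (t+1)) (u 0)))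
        = (x - Psp q d (fun t => u (t+1)) (fun t => y (t+1)) w)
            - Esp q d (fun t => u (t+1)) w / Esp q d (fun t => u (t+1)) (u 0)
              * (y 0 - Psp q d (fun t => u (t+1)) (fun t => y (t+1)) (u 0)) := by ring
    rw [hb2]
    ring

lemma esp_rep (σ : F →+* L) (d : ℕ) (u : ℕ → L) :
    ∃ η : ℕ → L, η d = 1 ∧ η 0 = Msp q d u ∧
      ∀ z : L, Esp q d u z = ∑ k ∈ range (d+1), η k * z ^ q ^ k := by
  induction d generalizing u with
  | zero =>
    refine ⟨fun _ => 1, rfl, by simp [Msp], fun z => by simp [Esp]⟩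
  | succ d ih =>
    obtain ⟨η, htop, hzero, hsum⟩ := ih (fun t => u (t+1))
    refine ⟨fun k => (if k = 0 then 0 else η (k-1) ^ q)
      - Esp q d (fun t => u (t+1)) (u 0) ^ (q - 1) * (if k ≤ d then η k else 0), ?_, ?_, ?_⟩
    · show (if (d+1 : ℕ) = 0 then (0:L) else η ((d+1)-1) ^ q)
          - Esp q d (fun t => u (t+1)) (u 0) ^ (q - 1) * (if d+1 ≤ d then η (d+1) else 0) = 1
      rw [if_neg (by omega : ¬ d + 1 = 0), if_neg (by omega : ¬ d + 1 ≤ d)]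
      simp only [Nat.add_sub_cancel, htop, one_pow, mul_zero, sub_zero]
    · show (if (0 : ℕ) = 0 then (0:L) else η (0-1) ^ q)
          - Esp q d (fun t => u (t+1)) (u 0) ^ (q - 1) * (if 0 ≤ d then η 0 else 0) = Msp q (d+1) u
      rw [if_pos rfl, if_pos (by omega : 0 ≤ d), hzero]
      simp only [Msp, zero_sub, neg_mul]
    · intro z
      simp only [Esp]
      rw [hsum z, sum_pow_q σ]
      have hterm : ∀ k, (η k * z ^ q ^ k) ^ q = η k ^ q * z ^ q ^ (k + 1) := by
        intro k
        rw [mul_pow, ← pow_mul, pow_succ]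
      simp only [hterm]
      have hrhs : (∑ k ∈ range (d+1+1), ((if k = 0 then 0 else η (k-1) ^ q)
            - Esp q d (fun t => u (t+1)) (u 0) ^ (q - 1) * (if k ≤ d then η k else 0)) * z ^ q ^ k)
          = (∑ k ∈ range (d+1+1), (if k = 0 then 0 else η (k-1) ^ q) * z ^ q ^ k)
            - ∑ k ∈ range (d+1+1), Esp q d (fun t => u (t+1)) (u 0) ^ (q - 1)
                * (if k ≤ d then η k else 0) * z ^ q ^ k := by
        rw [← Finset.sum_sub_distrib]
        exact Finset.sum_congr rfl fun k _ => by ring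
      rw [hrhs]
      have h1 : (∑ k ∈ range (d+1+1), (if k = 0 then 0 else η (k-1) ^ q) * z ^ q ^ k)
          = ∑ k ∈ range (d+1), η k ^ q * z ^ q ^ (k+1) := by
        rw [Finset.sum_range_succ']
        simp
      have h2 : (∑ k ∈ range (d+1+1), Esp q d (fun t => u (t+1)) (u 0) ^ (q - 1)
            * (if k ≤ d then η k else 0) * z ^ q ^ k)
          = Esp q d (fun t => u (t+1)) (u 0) ^ (q - 1) * ∑ k ∈ range (d+1), η k * z ^ q ^ k := by
        rw [Finset.sum_range_succ, if_neg (by omega : ¬ d + 1 ≤ d), mul_zero, zero_mul, add_zero]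
        rw [Finset.mul_sum]
        refine Finset.sum_congr rfl fun k hk => ?_
        rw [if_pos (by have := mem_range.1 hk; omega : k ≤ d)]
        ring
      rw [h1, h2, hsum]
  
lemma psp_rep (σ : F →+* L) (d : ℕ) (u y : ℕ → L) :
    ∃ b : ℕ → L, ∀ z : L, Psp q d u y z = ∑ k ∈ range d, b k * z ^ q ^ k := by
  induction d generalizing u y with
  | zero => exact ⟨fun _ => 0, fun z => by simp [Psp]⟩
  | succ d ih =>
    obtain ⟨b', hb⟩ := ih (fun t => u (t+1)) (fun t => y (t+1))
    obtain ⟨η, _, _, hsum⟩ := esp_rep σ d (fun t => u (t+1))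
    refine ⟨fun k => (if k < d then b' k else 0)
      + η k * ((y 0 - Psp q d (fun t => u (t+1)) (fun t => y (t+1)) (u 0))
          / Esp q d (fun t => u (t+1)) (u 0)), fun z => ?_⟩
    simp only [Psp]
    rw [hb z, hsum z]
    set c := (y 0 - Psp q d (fun t => u (t+1)) (fun t => y (t+1)) (u 0))
      / Esp q d (fun t => u (t+1)) (u 0) with hc
    have hsplit : (∑ k ∈ range (d+1), ((if k < d then b' k else 0) + η k * c) * z ^ q ^ k)
        = (∑ k ∈ range (d+1), (if k < d then b' k else 0) * z ^ q ^ k)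
          + ∑ k ∈ range (d+1), η k * c * z ^ q ^ k := by
      rw [← Finset.sum_add_distrib]
      exact Finset.sum_congr rfl fun k _ => by ring
    rw [hsplit]
    congr 1
    · rw [Finset.sum_range_succ, if_neg (by omega : ¬ d < d), zero_mul, add_zero]
      exact Finset.sum_congr rfl fun k hk => by rw [if_pos (mem_range.1 hk)]
    · rw [hc, div_mul_eq_mul_div, mul_div_assoc, Finset.sum_mul]
      exact Finset.sum_congr rfl fun k _ => by ring

lemma psp_interp (σ : F →+* L) (d : ℕ) (u y : ℕ → L)
    (hind : ∀ c : Fin d → F, c ≠ 0 → (∑ t : Fin d, σ (c t) * u (t : ℕ)) ≠ 0)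
    (j : ℕ) (hj : j < d) : Psp q d u y (u j) = y j := by
  induction d generalizing u y j with
  | zero => omega
  | succ d ih =>
    simp only [Psp]
    cases j with
    | zero =>
      rw [div_self (esp_head_ne σ d u hind)]
      ring
    | succ j =>
      have h0 : Esp q d (fun t => u (t+1)) (u (j+1)) = 0 :=
        esp_vanish σ d (fun t => u (t+1)) j (by omega)
      rw [h0, zero_div, zero_mul, add_zero]
      exact ih (fun t => u (t+1)) (fun t => y (t+1)) (hind_tail σ d u hind) j (by omega)

end
end Mach

section App
variable {F}

def σF : F →+* RatFunc F := (algebraMap (Polynomial F) (RatFunc F)).comp C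

def uF : ℕ → RatFunc F := fun t => θK F ^ t

def yF (j : ℕ) : ℕ → RatFunc F :=
  fun t => algebraMap (Polynomial F) (RatFunc F) (hasseDeriv j ((X : Polynomial F) ^ t))

def ptsF : ℕ → RatFunc F := fun k => θK F ^ q ^ k


variable (F)

lemma E1 (i : ℕ) (hi : 1 ≤ i) :
    Esp q i (uF (F := F)) (uF (F := F) i)
      = algebraMap (Polynomial F) (RatFunc F) (Lp F i) * Msp q i (uF (F := F)) := by
  classical
  obtain ⟨η, htop, hzero, hsum⟩ := esp_rep (σF (F := F)) i (uF (F := F))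
  set M : Polynomial (RatFunc F) := ∏ n ∈ Icc 1 i, (X - C (ptsF (F := F) n)) with hM
  have hMmonic : M.Monic := monic_prod_of_monic _ _ fun n _ => monic_X_sub_C _
  have hMdeg : M.natDegree = i := by
    rw [hM, natDegree_prod _ _ fun n _ => X_sub_C_ne_zero _]
    simp [natDegree_X_sub_C, Nat.card_Icc]
  have hcoeffi : M.coeff i = 1 := by
    have h := hMmonic.coeff_natDegree
    rwa [hMdeg] at h
  have heval : ∀ v : RatFunc F, M.eval v = ∏ n ∈ Icc 1 i, (v - ptsF (F := F) n) := by
    intro v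
    rw [hM, eval_prod]
    exact Finset.prod_congr rfl fun n _ => by rw [eval_sub, eval_X, eval_C]
  have hexp : ∀ v : RatFunc F, M.eval v = ∑ t ∈ range (i+1), M.coeff t * v ^ t := by
    intro v
    conv_lhs => rw [eval_eq_sum_range, hMdeg]
  have hTval : ∀ t : ℕ, (∑ k ∈ range (i+1), η k * ptsF (F := F) k ^ t)
      = Esp q i (uF (F := F)) (uF (F := F) t) := by
    intro t
    rw [hsum (uF (F := F) t)]
    refine Finset.sum_congr rfl fun k _ => ?_
    show η k * (θK F ^ q ^ k) ^ t = η k * (θK F ^ t) ^ q ^ k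
    rw [pow_right_comm]
  have hT2 : (∑ k ∈ range (i+1), η k * M.eval (ptsF (F := F) k))
      = Esp q i (uF (F := F)) (uF (F := F) i) := by
    calc (∑ k ∈ range (i+1), η k * M.eval (ptsF (F := F) k))
        = ∑ k ∈ range (i+1), ∑ t ∈ range (i+1), M.coeff t * (η k * ptsF (F := F) k ^ t) := by
          refine Finset.sum_congr rfl fun k _ => ?_
          rw [hexp, Finset.mul_sum]
          exact Finset.sum_congr rfl fun t _ => by ring
      _ = ∑ t ∈ range (i+1), M.coeff t * ∑ k ∈ range (i+1), η k * ptsF (F := F) k ^ t := by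
          rw [Finset.sum_comm]
          exact Finset.sum_congr rfl fun t _ => by rw [Finset.mul_sum]
      _ = ∑ t ∈ range (i+1), M.coeff t * Esp q i (uF (F := F)) (uF (F := F) t) := by
          exact Finset.sum_congr rfl fun t _ => by rw [hTval]
      _ = Esp q i (uF (F := F)) (uF (F := F) i) := by
          rw [Finset.sum_range_succ, hcoeffi, one_mul, Finset.sum_eq_zero, zero_add]
          intro t ht
          rw [esp_vanish (σF (F := F)) i (uF (F := F)) t (mem_range.1 ht), mul_zero]
  have hT1 : (∑ k ∈ range (i+1), η k * M.eval (ptsF (F := F) k))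
      = η 0 * M.eval (ptsF (F := F) 0) := by
    rw [Finset.sum_range_succ', Finset.sum_eq_zero, zero_add]
    intro k hk
    have hz : M.eval (ptsF (F := F) (k+1)) = 0 := by
      rw [heval]
      refine Finset.prod_eq_zero (i := k+1) (Finset.mem_Icc.2 ⟨by omega, by have := mem_range.1 hk; omega⟩) ?_
      rw [sub_self]
    rw [hz, mul_zero]
  have hpts0 : ptsF (F := F) 0 = θK F := by
    rw [ptsF]
    norm_num
  have hevalL : M.eval (ptsF (F := F) 0) = algebraMap (Polynomial F) (RatFunc F) (Lp F i) := by
    rw [heval, hpts0, Lp, map_mul, map_pow, map_neg, map_one, map_prod]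
    have hmapped : ∀ n ∈ Icc 1 i,
        algebraMap (Polynomial F) (RatFunc F) ((X : Polynomial F) ^ q ^ n - X)
          = θK F ^ q ^ n - θK F := by
      intro n _
      rw [map_sub, map_pow]
      rfl
    rw [Finset.prod_congr rfl hmapped]
    have h2 : ∀ n ∈ Icc 1 i, θK F - ptsF (F := F) n = -1 * (θK F ^ q ^ n - θK F) :=
      fun n _ => by rw [ptsF]; ring
    rw [Finset.prod_congr rfl h2, Finset.prod_mul_distrib, Finset.prod_const, Nat.card_Icc]
    norm_num
  rw [← hT2, hT1, hzero, hevalL, mul_comm]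

lemma E2 (i j : ℕ) (hi : 1 ≤ i) (hj : j ≤ i)
    (hind : ∀ c : Fin i → F, c ≠ 0 → (∑ t : Fin i, σF (F := F) (c t) * uF (F := F) (t : ℕ)) ≠ 0) :
    yF (F := F) j i - Psp q i (uF (F := F)) (yF (F := F) j) (uF (F := F) i)
      = (-1 : RatFunc F) ^ (i - j)
          * esymF (Icc 1 (i-1)) (fun n : ℕ => θK F ^ q ^ n - θK F) (i - j) := by
  classical
  obtain ⟨b, hb⟩ := psp_rep (σF (F := F)) i (uF (F := F)) (yF (F := F) j)
  set N : Polynomial (RatFunc F) := ∏ k ∈ range i, (X - C (ptsF (F := F) k)) with hN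
  have hNmonic : N.Monic := monic_prod_of_monic _ _ fun n _ => monic_X_sub_C _
  have hNdeg : N.natDegree = i := by
    rw [hN, natDegree_prod _ _ fun n _ => X_sub_C_ne_zero _]
    simp [natDegree_X_sub_C]
  have hcoeffi : N.coeff i = 1 := by
    have h := hNmonic.coeff_natDegree
    rwa [hNdeg] at h
  have hexp : ∀ v : RatFunc F, N.eval v = ∑ t ∈ range (i+1), N.coeff t * v ^ t := by
    intro v
    conv_lhs => rw [eval_eq_sum_range, hNdeg]
  have hPt : ∀ t : ℕ, (∑ k ∈ range i, b k * ptsF (F := F) k ^ t)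
      = Psp q i (uF (F := F)) (yF (F := F) j) (uF (F := F) t) := by
    intro t
    rw [hb (uF (F := F) t)]
    refine Finset.sum_congr rfl fun k _ => ?_
    show b k * (θK F ^ q ^ k) ^ t = b k * (θK F ^ t) ^ q ^ k
    rw [pow_right_comm]
  have hzero : (∑ k ∈ range i, b k * N.eval (ptsF (F := F) k)) = 0 := by
    refine Finset.sum_eq_zero fun k hk => ?_
    have hz : N.eval (ptsF (F := F) k) = 0 := by
      rw [hN, eval_prod]
      refine Finset.prod_eq_zero hk ?_
      rw [eval_sub, eval_X, eval_C, sub_self]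
    rw [hz, mul_zero]
  have hswap : (∑ k ∈ range i, b k * N.eval (ptsF (F := F) k))
      = ∑ t ∈ range (i+1), N.coeff t * Psp q i (uF (F := F)) (yF (F := F) j) (uF (F := F) t) := by
    calc (∑ k ∈ range i, b k * N.eval (ptsF (F := F) k))
        = ∑ k ∈ range i, ∑ t ∈ range (i+1), N.coeff t * (b k * ptsF (F := F) k ^ t) := by
          refine Finset.sum_congr rfl fun k _ => ?_
          rw [hexp, Finset.mul_sum]
          exact Finset.sum_congr rfl fun t _ => by ring
      _ = ∑ t ∈ range (i+1), N.coeff t * ∑ k ∈ range i, b k * ptsF (F := F) k ^ t := by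
          rw [Finset.sum_comm]
          exact Finset.sum_congr rfl fun t _ => by rw [Finset.mul_sum]
      _ = ∑ t ∈ range (i+1), N.coeff t * Psp q i (uF (F := F)) (yF (F := F) j) (uF (F := F) t) := by
          exact Finset.sum_congr rfl fun t _ => by rw [hPt]
  have hinterp : ∀ t, t < i → Psp q i (uF (F := F)) (yF (F := F) j) (uF (F := F) t) = yF (F := F) j t :=
    fun t ht => psp_interp (σF (F := F)) i (uF (F := F)) (yF (F := F) j) hind t ht
  have hkey : yF (F := F) j i - Psp q i (uF (F := F)) (yF (F := F) j) (uF (F := F) i)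
      = ∑ t ∈ range (i+1), N.coeff t * yF (F := F) j t := by
    have h1 := hzero
    rw [hswap, Finset.sum_range_succ, hcoeffi, one_mul] at h1
    rw [Finset.sum_congr rfl (fun t ht => by rw [hinterp t (mem_range.1 ht)])] at h1
    rw [Finset.sum_range_succ, hcoeffi, one_mul]
    linear_combination -h1
  have hyt : ∀ t : ℕ, yF (F := F) j t = ((t.choose j : ℕ) : RatFunc F) * θK F ^ (t - j) := by
    intro t
    rw [yF]
    rw [X_pow_eq_monomial, hasseDeriv_monomial, mul_one, ← C_mul_X_pow_eq_monomial,
      map_mul, map_pow, Polynomial.C_eq_natCast, map_natCast]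
    rfl
  have htay : ∀ t : ℕ, (taylor (θK F) ((X : Polynomial (RatFunc F)) ^ t)).coeff j
      = ((t.choose j : ℕ) : RatFunc F) * θK F ^ (t - j) := by
    intro t
    rw [taylor_apply, pow_comp, X_comp, coeff_X_add_C_pow]
    ring
  have hsum_tay : (∑ t ∈ range (i+1), N.coeff t * yF (F := F) j t)
      = (taylor (θK F) N).coeff j := by
    conv_rhs => rw [as_sum_range' N (i+1) (by omega)]
    rw [map_sum, finset_sum_coeff]
    refine Finset.sum_congr rfl fun t ht => ?_
    rw [← C_mul_X_pow_eq_monomial, ← smul_eq_C_mul, LinearMap.map_smul, Polynomial.coeff_smul,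
      htay t, hyt t, smul_eq_mul]
  have htayN : taylor (θK F) N
      = X * ∏ n ∈ Icc 1 (i-1), ((X : Polynomial (RatFunc F)) - C (θK F ^ q ^ n - θK F)) := by
    rw [taylor_apply, hN, Polynomial.prod_comp]
    have hfac : ∀ k ∈ range i, ((X : Polynomial (RatFunc F)) - C (ptsF (F := F) k)).comp (X + C (θK F))
        = X - C (ptsF (F := F) k - θK F) := by
      intro k _
      rw [sub_comp, X_comp, C_comp, map_sub]
      ring
    rw [Finset.prod_congr rfl hfac]
    obtain ⟨n, rfl⟩ : ∃ n, i = n + 1 := ⟨i - 1, by omega⟩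
    rw [Finset.prod_range_succ']
    have h0 : ptsF (F := F) 0 - θK F = 0 := by
      rw [ptsF]
      norm_num
    rw [h0, map_zero, sub_zero, mul_comm]
    congr 1
    rw [show n + 1 - 1 = n from rfl]
    rw [← Finset.Ico_add_one_right_eq_Icc, Finset.prod_Ico_eq_prod_range]
    refine Finset.prod_congr (by norm_num) fun k _ => ?_
    rw [ptsF, Nat.add_comm 1 k]
  rw [hkey, hsum_tay, htayN]
  cases j with
  | zero =>
    rw [Nat.sub_zero]
    rw [Polynomial.mul_coeff_zero, coeff_X_zero, zero_mul]
    have h2 : esymF (Icc 1 (i-1)) (fun n : ℕ => θK F ^ q ^ n - θK F) i = 0 := by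
      rw [esymF, Finset.powersetCard_eq_empty.2 (by rw [Nat.card_Icc]; omega), Finset.sum_empty]
    rw [h2, mul_zero]
  | succ j' =>
    rw [coeff_X_mul]
    have hconv : ∀ n ∈ Icc 1 (i-1), ((X : Polynomial (RatFunc F)) - C (θK F ^ q ^ n - θK F))
        = X + C (-(θK F ^ q ^ n - θK F)) := fun n _ => by rw [map_neg]; ring
    rw [Finset.prod_congr rfl hconv]
    rw [Finset.prod_X_add_C_coeff _ _ (by rw [Nat.card_Icc]; omega : j' ≤ #(Icc 1 (i-1)))]
    rw [Nat.card_Icc]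
    have harith : i - 1 + 1 - 1 - j' = i - (j'+1) := by omega
    rw [harith, esymF, Finset.mul_sum]
    refine Finset.sum_congr rfl fun T hT => ?_
    have hcard : T.card = i - (j'+1) := (Finset.mem_powersetCard.1 hT).2
    calc (∏ m ∈ T, -(θK F ^ q ^ m - θK F)) = ∏ m ∈ T, (-1) * (θK F ^ q ^ m - θK F) :=
          Finset.prod_congr rfl fun m _ => by ring
      _ = (-1)^(i - (j'+1)) * ∏ m ∈ T, (θK F ^ q ^ m - θK F) := by
          rw [Finset.prod_mul_distrib, Finset.prod_const, hcard]
/-- the parametrization of monic polynomials of degree `i` -/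
def phiF (i : ℕ) (c : Fin i → F) : Polynomial F :=
  X ^ i + ∑ t : Fin i, C (c t) * X ^ (t : ℕ)

variable {F}

lemma sum_deg_lt (i : ℕ) (c : Fin i → F) :
    (∑ t : Fin i, C (c t) * X ^ (t : ℕ) : Polynomial F).degree < (i : ℕ) := by
  refine lt_of_le_of_lt (degree_sum_le _ _) ?_
  rw [Finset.sup_lt_iff (by exact_mod_cast WithBot.bot_lt_coe (i : ℕ))]
  intro t _
  refine lt_of_le_of_lt (degree_C_mul_X_pow_le _ _) ?_
  exact_mod_cast t.isLt

lemma phiF_monic (i : ℕ) (c : Fin i → F) : (phiF F i c).Monic :=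
  monic_X_pow_add (by exact_mod_cast sum_deg_lt i c)

lemma phiF_natDegree (i : ℕ) (hi : 1 ≤ i) (c : Fin i → F) : (phiF F i c).natDegree = i := by
  have hdeg : (phiF F i c).degree = (i : ℕ) := by
    rw [phiF, degree_add_eq_left_of_degree_lt, degree_X_pow]
    rw [degree_X_pow]
    exact sum_deg_lt i c
  exact natDegree_eq_of_degree_eq_some hdeg

lemma sum_coeff_lt (i : ℕ) (c : Fin i → F) (t : ℕ) (ht : t < i) :
    (∑ t' : Fin i, C (c t') * X ^ (t' : ℕ) : Polynomial F).coeff t = c ⟨t, ht⟩ := by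
  rw [finset_sum_coeff]
  rw [Finset.sum_eq_single (⟨t, ht⟩ : Fin i)]
  · rw [coeff_C_mul, coeff_X_pow, if_pos rfl, mul_one]
  · intro b _ hb
    rw [coeff_C_mul, coeff_X_pow, if_neg (fun h => hb (Fin.ext h.symm)), mul_zero]
  · intro h
    exact absurd (Finset.mem_univ _) h

lemma phiF_coeff_lt (i : ℕ) (c : Fin i → F) (t : ℕ) (ht : t < i) :
    (phiF F i c).coeff t = c ⟨t, ht⟩ := by
  rw [phiF, coeff_add, coeff_X_pow, if_neg (by omega), zero_add, sum_coeff_lt i c t ht]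

lemma phiF_inj (i : ℕ) : Function.Injective (phiF F i) := by
  intro c c' h
  funext t
  have := congrArg (fun p => Polynomial.coeff p (t : ℕ)) h
  simpa [phiF_coeff_lt i c (t : ℕ) t.isLt, phiF_coeff_lt i c' (t : ℕ) t.isLt] using this

lemma phiF_surj (i : ℕ) (hi : 1 ≤ i) (a : Polynomial F) (ha1 : a.Monic) (ha2 : a.natDegree = i) :
    a = phiF F i (fun t => a.coeff (t : ℕ)) := by
  ext n
  rcases lt_trichotomy n i with hn | hn | hn
  · rw [phiF_coeff_lt i _ n hn]
  · subst hn
    rw [phiF, coeff_add, coeff_X_pow, if_pos rfl]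
    have h0 : (∑ t' : Fin n, C (a.coeff (t' : ℕ)) * X ^ (t' : ℕ) : Polynomial F).coeff n = 0 := by
      rw [finset_sum_coeff]
      refine Finset.sum_eq_zero fun t' _ => ?_
      rw [coeff_C_mul, coeff_X_pow, if_neg (by have := t'.isLt; omega), mul_zero]
    rw [h0, add_zero, ← ha2]
    exact ha1.coeff_natDegree
  · have h1 : a.coeff n = 0 := coeff_eq_zero_of_natDegree_lt (by omega)
    have h2 : (phiF F i fun t => a.coeff (t : ℕ)).coeff n = 0 :=
      coeff_eq_zero_of_natDegree_lt (by rw [phiF_natDegree i hi]; omega)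
    rw [h1, h2]

lemma transfer (i : ℕ) (hi : 1 ≤ i) (f : Polynomial F → RatFunc F) :
    (∑ᶠ a ∈ {a : Polynomial F | a.Monic ∧ a.natDegree = i}, f a)
      = ∑ c : Fin i → F, f (phiF F i c) := by
  classical
  have hset : {a : Polynomial F | a.Monic ∧ a.natDegree = i}
      = ↑(Finset.image (phiF F i) Finset.univ) := by
    ext a
    simp only [Set.mem_setOf_eq, Finset.coe_image, Set.mem_image, Finset.mem_coe]
    constructor
    · rintro ⟨h1, h2⟩
      exact ⟨fun t => a.coeff (t : ℕ), by simp, (phiF_surj i hi a h1 h2).symm⟩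
    · rintro ⟨c, _, rfl⟩
      exact ⟨phiF_monic i c, phiF_natDegree i hi c⟩
  rw [hset, finsum_mem_coe_finset, Finset.sum_image fun c _ c' _ h => phiF_inj i h]

lemma alg_phiF (i : ℕ) (c : Fin i → F) :
    algebraMap (Polynomial F) (RatFunc F) (phiF F i c)
      = uF (F := F) i + ∑ t : Fin i, σF (F := F) (c t) * uF (F := F) (t : ℕ) := by
  rw [phiF, map_add, map_pow, map_sum]
  congr 1
  refine Finset.sum_congr rfl fun t _ => ?_
  rw [map_mul, map_pow]
  rfl

lemma alg_hasse_phiF (i j : ℕ) (c : Fin i → F) :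
    algebraMap (Polynomial F) (RatFunc F) (hasseDeriv j (phiF F i c))
      = yF (F := F) j i + ∑ t : Fin i, σF (F := F) (c t) * yF (F := F) j (t : ℕ) := by
  rw [phiF, map_add, map_sum, map_add, map_sum]
  congr 1
  refine Finset.sum_congr rfl fun t _ => ?_
  rw [← smul_eq_C_mul, LinearMap.map_smul, smul_eq_C_mul, map_mul]
  rfl

lemma hw_all (i : ℕ) (hi : 1 ≤ i) :
    ∀ c : Fin i → F, uF (F := F) i + ∑ t : Fin i, σF (F := F) (c t) * uF (F := F) (t : ℕ) ≠ 0 := by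
  intro c h
  rw [← alg_phiF i c] at h
  have : phiF F i c = 0 := RatFunc.algebraMap_injective F (by rw [h, map_zero])
  exact (phiF_monic i c).ne_zero this

lemma hind_all (i : ℕ) :
    ∀ c : Fin i → F, c ≠ 0 → (∑ t : Fin i, σF (F := F) (c t) * uF (F := F) (t : ℕ)) ≠ 0 := by
  intro c hc h
  have halg : (∑ t : Fin i, σF (F := F) (c t) * uF (F := F) (t : ℕ))
      = algebraMap (Polynomial F) (RatFunc F) (∑ t : Fin i, C (c t) * X ^ (t : ℕ)) := by
    rw [map_sum]
    refine Finset.sum_congr rfl fun t _ => ?_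
    rw [map_mul, map_pow]
    rfl
  rw [halg] at h
  have h0 : (∑ t : Fin i, C (c t) * X ^ (t : ℕ) : Polynomial F) = 0 :=
    RatFunc.algebraMap_injective F (by rw [h, map_zero])
  obtain ⟨t0, ht0⟩ := Function.ne_iff.1 hc
  apply ht0
  have := congrArg (fun p => Polynomial.coeff p (t0 : ℕ)) h0
  simpa [sum_coeff_lt i c (t0 : ℕ) t0.isLt] using this

lemma Lp_ne (i : ℕ) : algebraMap (Polynomial F) (RatFunc F) (Lp F i) ≠ 0 := by
  have h1 : Lp F i ≠ 0 := by
    rw [Lp]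
    refine mul_ne_zero (pow_ne_zero _ (neg_ne_zero.2 one_ne_zero)) ?_
    refine prod_ne_zero_iff.2 fun n hn => ?_
    have hn1 : 1 ≤ n := (Finset.mem_Icc.1 hn).1
    exact FiniteField.X_pow_card_sub_X_ne_zero F
      (Nat.one_lt_pow (by omega) Fintype.one_lt_card)
  intro h
  exact h1 (RatFunc.algebraMap_injective F (by rw [h, map_zero]))


end App

/-- Let `i ≥ 1`, `1 ≤ s ≤ q−1`, and `0 ≤ j ≤ i`.  Then
`Σ_{a ∈ A_{i+}} ∂_θ^j(a)^s / a = ((−1)^{s(i−j)} / L_i) · e_{i−1,i−j}([1],[2],…,[i−1])^s`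
in `K = 𝔽_q(θ)`, where `[n] = θ^{q^n} − θ`, `A_{i+}` is the set of monic polynomials of degree
`i` in `A = 𝔽_q[θ]`, and `∂_θ^j` is the `j`-th hyperderivative (Hasse derivative). -/
theorem stmt10 (i : ℕ) (hi : 1 ≤ i) (s : ℕ) (hs1 : 1 ≤ s) (hs2 : s ≤ q - 1)
    (j : ℕ) (hj : j ≤ i) :
    (∑ᶠ a ∈ {a : Polynomial F | a.Monic ∧ a.natDegree = i},
        algebraMap (Polynomial F) (RatFunc F) (hasseDeriv j a) ^ s
          / algebraMap (Polynomial F) (RatFunc F) a)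
      = ((-1 : RatFunc F) ^ (s * (i - j))
            / algebraMap (Polynomial F) (RatFunc F) (Lp F i))
          * esymF (Icc 1 (i - 1)) (fun n => θK F ^ q ^ n - θK F) (i - j) ^ s := by

  classical
  rw [transfer i hi]
  have hstep : ∀ c : Fin i → F,
      algebraMap (Polynomial F) (RatFunc F) (hasseDeriv j (phiF F i c)) ^ s
          / algebraMap (Polynomial F) (RatFunc F) (phiF F i c)
        = (yF (F := F) j i + ∑ t : Fin i, σF (F := F) (c t) * yF (F := F) j (t : ℕ)) ^ s
          / (uF (F := F) i + ∑ t : Fin i, σF (F := F) (c t) * uF (F := F) (t : ℕ)) := by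
    intro c
    rw [alg_phiF i c, alg_hasse_phiF i j c]
  rw [Finset.sum_congr rfl fun c _ => hstep c]
  rw [mainLemma (σF (F := F)) s hs2 i (uF (F := F)) (yF (F := F) j) (uF (F := F) i)
    (yF (F := F) j i) (hw_all i hi) (hind_all i)]
  rw [E1 F i hi, E2 F i j hi hj (hind_all i)]
  have hM : Msp q i (uF (F := F)) ≠ 0 := msp_ne (σF (F := F)) i (uF (F := F)) (hind_all i)
  have hL : algebraMap (Polynomial F) (RatFunc F) (Lp F i) ≠ 0 := Lp_ne i
  rw [mul_pow, ← pow_mul, Nat.mul_comm (i - j) s]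
  field_simp


end
end
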